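/- arXiv:2110.02162 — 8 statements merged into one kernel-verified Lean document; each statement's English description precedes it below -/
import Mathlib

section
/- Let B_3 be the braid group on 3 strands. If G is a finite group and f : B_3 → G is a surjective group homomorphism with G not cyclic, then 6 ≤ Nat.card G, and if Nat.card G = 6 then G is isomorphic to the symmetric group S_3 = Equiv.Perm (Fin 3). -/
/-- The braid relations on `n` strands, as elements of the free group on
`n - 1` generators (generator `i` corresponds to the half twist `σ_{i+1}`
in the usual 1-indexed notation). -/
def braidRels (n : ℕ) : Set (FreeGroup (Fin (n - 1))) :=
  { r | (∃ i j : Fin (n - 1), (j : ℕ) = (i : ℕ) + 1 ∧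
          r = FreeGroup.of i * FreeGroup.of j * FreeGroup.of i *
              (FreeGroup.of j * FreeGroup.of i * FreeGroup.of j)⁻¹) ∨
        (∃ i j : Fin (n - 1), (i : ℕ) + 2 ≤ (j : ℕ) ∧
          r = FreeGroup.of i * FreeGroup.of j * (FreeGroup.of j * FreeGroup.of i)⁻¹) }

/-- The braid group on `n` strands, presented by the Artin generators and the
braid and far-commutation relations. -/
def BraidGroup (n : ℕ) : Type := PresentedGroup (braidRels n)

instance (n : ℕ) : Group (BraidGroup n) :=
  inferInstanceAs (Group (PresentedGroup (braidRels n)))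

/-- The Artin generator `σ_k` (1-indexed, so `1 ≤ k ≤ n - 1`) of the braid group
`B_n`.  Out-of-range indices give the junk value `1`. -/
def braidGen (n k : ℕ) : BraidGroup n :=
  if h : k - 1 < n - 1 then PresentedGroup.of (⟨k - 1, h⟩ : Fin (n - 1)) else 1

/-- The transpositions corresponding to the Artin generators. -/
def braidPermGen (n : ℕ) (i : Fin (n - 1)) : Equiv.Perm (Fin n) :=
  Equiv.swap ⟨(i : ℕ), by have := i.isLt; omega⟩ ⟨(i : ℕ) + 1, by have := i.isLt; omega⟩

theorem braidPermGen_rels (n : ℕ) :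
    ∀ r ∈ braidRels n, FreeGroup.lift (braidPermGen n) r = 1 := by
  rintro r (⟨i, j, hij, rfl⟩ | ⟨i, j, hij, rfl⟩) <;>
    simp only [map_mul, map_inv, FreeGroup.lift_apply_of, mul_inv_eq_one]
  · -- braid relation
    have hi := i.isLt
    have hj := j.isLt
    unfold braidPermGen
    set a : Fin n := ⟨(i : ℕ), by omega⟩
    set b : Fin n := ⟨(i : ℕ) + 1, by omega⟩
    set c : Fin n := ⟨(j : ℕ) + 1, by omega⟩
    have hb : (⟨(j : ℕ), by omega⟩ : Fin n) = b := by simp [b, Fin.ext_iff, hij]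
    rw [hb]
    have hab : a ≠ b := by simp [a, b, Fin.ext_iff]
    have hac : a ≠ c := by simp [a, c, Fin.ext_iff]; omega
    have hbc : b ≠ c := by simp [b, c, Fin.ext_iff]; omega
    have h1 : Equiv.swap b c * Equiv.swap a b * Equiv.swap b c = Equiv.swap c a :=
      Equiv.swap_mul_swap_mul_swap hab hac
    have h2 : Equiv.swap b a * Equiv.swap c b * Equiv.swap b a = Equiv.swap a c :=
      Equiv.swap_mul_swap_mul_swap hbc.symm hac.symm
    rw [Equiv.swap_comm b a, Equiv.swap_comm c b] at h2
    rw [h1, h2, Equiv.swap_comm c a]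
  · -- far commutation
    have hi := i.isLt
    have hj := j.isLt
    unfold braidPermGen
    set a : Fin n := ⟨(i : ℕ), by omega⟩
    set b : Fin n := ⟨(i : ℕ) + 1, by omega⟩
    set c : Fin n := ⟨(j : ℕ), by omega⟩
    set d : Fin n := ⟨(j : ℕ) + 1, by omega⟩
    have hdisj : (Equiv.swap a b).Disjoint (Equiv.swap c d) := by
      intro x
      by_cases hx : x = a ∨ x = b
      · right
        rcases hx with rfl | rfl <;>
          exact Equiv.swap_apply_of_ne_of_ne
            (by simp [a, b, c, d, Fin.ext_iff]; omega)
            (by simp [a, b, c, d, Fin.ext_iff]; omega)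
      · left
        push_neg at hx
        exact Equiv.swap_apply_of_ne_of_ne hx.1 hx.2
    exact hdisj.commute

/-- The natural projection `π : B_n → S_n`, sending the Artin generator `σ_i`
to the adjacent transposition `(i, i+1)`. -/
def braidPi (n : ℕ) : BraidGroup n →* Equiv.Perm (Fin n) :=
  PresentedGroup.toGroup (braidPermGen_rels n)


/-- `Equiv.permCongr` as a `MulEquiv`. -/
def permCongrMulEquiv {α β : Type*} (e : α ≃ β) : Equiv.Perm α ≃* Equiv.Perm β :=
  { e.permCongr with
    map_mul' := fun p q => by
      ext x
      simp [Equiv.permCongr_apply] }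

/-- A nonabelian group of order 6 is isomorphic to `S₃`. -/
lemma nonabelian_order_six_iso (G : Type) [Group G] [Finite G]
    (h6 : Nat.card G = 6) (hna : ¬ ∀ a b : G, a * b = b * a) :
    Nonempty (G ≃* Equiv.Perm (Fin 3)) := by
  cases nonempty_fintype G
  obtain ⟨x, hx⟩ := exists_prime_orderOf_dvd_card (G := G) 2
    (by rw [← Nat.card_eq_fintype_card, h6]; norm_num)
  set H := Subgroup.zpowers x with hH
  have hcardH : Nat.card H = 2 := by rw [hH, Nat.card_zpowers, hx]
  have hQ : Nat.card (G ⧸ H) = 3 := by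
    have h1 := H.card_mul_index
    rw [hcardH, h6, Subgroup.index_eq_card] at h1
    omega
  set φ := MulAction.toPermHom G (G ⧸ H) with hφ
  have hker : φ.ker = H.normalCore := (Subgroup.normalCore_eq_ker H).symm
  have hkerbot : φ.ker = ⊥ := by
    by_contra hne
    have hle : φ.ker ≤ H := hker ▸ H.normalCore_le
    have hdvd : Nat.card φ.ker ∣ 2 := hcardH ▸ Subgroup.card_dvd_of_le hle
    rcases (Nat.dvd_prime Nat.prime_two).mp hdvd with h1 | h2
    · exact hne (Subgroup.card_eq_one.mp h1)
    · have hkH : φ.ker = H := Subgroup.eq_of_le_of_card_ge hle (by rw [h2, hcardH])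
      have hnormal : H.Normal := hkH ▸ φ.normal_ker
      have hx1 : x ≠ 1 := by
        intro h; rw [h, orderOf_one] at hx; omega
      have hxc : x ∈ Subgroup.center G := by
        rw [Subgroup.mem_center_iff]
        intro g
        obtain ⟨n, hn⟩ := hnormal.conj_mem x (Subgroup.mem_zpowers x) g
        have hsq : x ^ (2 : ℤ) = 1 := by
          have := pow_orderOf_eq_one x
          rw [hx] at this
          exact_mod_cast (zpow_natCast x 2).trans this
        rcases Int.even_or_odd n with ⟨m, hm⟩ | ⟨m, hm⟩
        · exfalso
          rw [hm, ← two_mul] at hn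
          simp only [zpow_mul, hsq, one_zpow] at hn
          apply hx1
          calc x = g⁻¹ * (g * x * g⁻¹) * g := by group
            _ = 1 := by rw [← hn]; group
        · rw [hm] at hn
          simp only [zpow_add, zpow_mul, hsq, one_zpow, one_mul, zpow_one] at hn
          calc g * x = (g * x * g⁻¹) * g := by group
            _ = x * g := by rw [← hn]
      have hHc : H ≤ Subgroup.center G := Subgroup.zpowers_le.mpr hxc
      have : Fact (Nat.Prime 3) := ⟨by norm_num⟩
      have hcyc : IsCyclic (G ⧸ H) := isCyclic_of_prime_card hQ
      exact hna (commutative_of_cyclic_center_quotient (QuotientGroup.mk' H)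
        (by rw [QuotientGroup.ker_mk']; exact hHc))
  have hinj : Function.Injective φ := (MonoidHom.ker_eq_bot_iff φ).mp hkerbot
  have : Fintype (G ⧸ H) := Fintype.ofFinite _
  have hQ3 : Fintype.card (G ⧸ H) = 3 := by rw [← Nat.card_eq_fintype_card]; exact hQ
  have hcardPerm : Nat.card (Equiv.Perm (G ⧸ H)) = 6 := by
    rw [Nat.card_eq_fintype_card, Fintype.card_perm, hQ3]; rfl
  have hbij : Function.Bijective φ :=
    (Nat.bijective_iff_injective_and_card φ).mpr ⟨hinj, by rw [h6, hcardPerm]⟩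
  have e2 : (G ⧸ H) ≃ Fin 3 := Fintype.equivFinOfCardEq hQ3
  exact ⟨(MulEquiv.ofBijective φ hbij).trans (permCongrMulEquiv e2)⟩

/-- The smallest non-cyclic quotient of `B_3` has order at least `6`, and any
non-cyclic quotient of order `6` is isomorphic to `S_3`. -/
theorem braid_three_smallest_noncyclic_quotient
    (G : Type) [Group G] [Finite G]
    (f : BraidGroup 3 →* G) (hf : Function.Surjective f) (hG : ¬ IsCyclic G) :
    6 ≤ Nat.card G ∧ (Nat.card G = 6 → Nonempty (G ≃* Equiv.Perm (Fin 3))) := by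
  set a : G := f (PresentedGroup.of (0 : Fin (3 - 1))) with ha
  set b : G := f (PresentedGroup.of (1 : Fin (3 - 1))) with hb
  -- the braid relation in the braid group
  have hrel0 : (PresentedGroup.of (0 : Fin (3 - 1)) * PresentedGroup.of 1 *
      PresentedGroup.of 0 : BraidGroup 3) =
      PresentedGroup.of 1 * PresentedGroup.of 0 * PresentedGroup.of 1 := by
    have hr : (FreeGroup.of (0 : Fin (3 - 1)) * FreeGroup.of 1 * FreeGroup.of 0 *
        (FreeGroup.of 1 * FreeGroup.of 0 * FreeGroup.of 1)⁻¹) ∈ braidRels 3 :=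
      Or.inl ⟨0, 1, rfl, rfl⟩
    have h1 : PresentedGroup.mk (braidRels 3)
        (FreeGroup.of (0 : Fin (3 - 1)) * FreeGroup.of 1 * FreeGroup.of 0 *
        (FreeGroup.of 1 * FreeGroup.of 0 * FreeGroup.of 1)⁻¹) = 1 :=
      (QuotientGroup.eq_one_iff _).mpr (Subgroup.subset_normalClosure hr)
    rw [map_mul, map_mul, map_inv, map_mul, map_mul, mul_inv_eq_one] at h1
    exact h1
  have hab : a * b * a = b * a * b := by
    have := congrArg f hrel0
    have e1 : ∀ x y z : BraidGroup 3, f (x * y * z) = f x * f y * f z := fun x y z => by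
      rw [map_mul, map_mul]
    exact (e1 _ _ _).symm.trans (this.trans (e1 _ _ _))
  -- generation
  have hgen : Subgroup.closure {a, b} = ⊤ := by
    have h1 : Subgroup.closure
        (Set.range (PresentedGroup.of : Fin (3 - 1) → BraidGroup 3)) = ⊤ :=
      PresentedGroup.closure_range_of _
    have h2 : f '' Set.range (PresentedGroup.of : Fin (3 - 1) → BraidGroup 3) = {a, b} := by
      refine (Set.range_comp (⇑f) _).symm.trans ?_
      ext y
      simp only [Set.mem_range, Function.comp_apply, Set.mem_insert_iff, Set.mem_singleton_iff]
      constructor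
      · rintro ⟨i, rfl⟩
        fin_cases i
        · left; rfl
        · right; rfl
      · rintro (rfl | rfl)
        · exact ⟨0, rfl⟩
        · exact ⟨1, rfl⟩
    calc Subgroup.closure {a, b}
        = Subgroup.map f (Subgroup.closure (Set.range PresentedGroup.of)) := by
          rw [MonoidHom.map_closure, h2]
      _ = ⊤ := by
          exact (congrArg (Subgroup.map f) h1).trans
            ((MonoidHom.range_eq_map f).symm.trans (MonoidHom.range_eq_top.mpr hf))
  -- abelian implies cyclic
  have hcyc : (∀ x y : G, x * y = y * x) → IsCyclic G := by
    intro hc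
    have hab2 : a = b := by
      apply mul_right_cancel (b := a * b)
      calc a * (a * b) = a * b * a := hc a (a * b)
        _ = b * a * b := hab
        _ = b * (a * b) := mul_assoc b a b
    rw [hab2, Set.pair_eq_singleton, ← Subgroup.zpowers_eq_closure] at hgen
    refine ⟨⟨b, fun g => ?_⟩⟩
    have hm : g ∈ (⊤ : Subgroup G) := Subgroup.mem_top g
    rwa [← hgen] at hm
  have hna : ¬ ∀ x y : G, x * y = y * x := fun hc => hG (hcyc hc)
  have h6 : 6 ≤ Nat.card G := by
    by_contra hlt
    push_neg at hlt
    have hpos : 0 < Nat.card G := Nat.card_pos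
    have hcase : Nat.card G = 1 ∨ Nat.card G = 2 ∨ Nat.card G = 3 ∨ Nat.card G = 4 ∨
        Nat.card G = 5 := by omega
    haveI : Fact (Nat.Prime 2) := ⟨by norm_num⟩
    haveI : Fact (Nat.Prime 3) := ⟨by norm_num⟩
    haveI : Fact (Nat.Prime 5) := ⟨by norm_num⟩
    rcases hcase with h | h | h | h | h
    · haveI := (Nat.card_eq_one_iff_unique.mp h).1
      exact hna fun x y => Subsingleton.elim _ _
    · exact hG (isCyclic_of_prime_card h)
    · exact hG (isCyclic_of_prime_card h)
    · exact hna (IsPGroup.commutative_of_card_eq_prime_sq (p := 2) (by rw [h]; norm_num))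
    · exact hG (isCyclic_of_prime_card h)
  exact ⟨h6, fun h => nonabelian_order_six_iso G h hna⟩
end

section
/- Let SL(2,ℤ) denote Matrix.SpecialLinearGroup (Fin 2) ℤ. If G is a finite group and f : SL(2,ℤ) → G is a surjective group homomorphism with G not cyclic, then 6 ≤ Nat.card G, and if Nat.card G = 6 then G is isomorphic to the symmetric group S_3 = Equiv.Perm (Fin 3). -/
open ModularGroup Matrix

local notation "SL2Z" => Matrix.SpecialLinearGroup (Fin 2) ℤ

private lemma T_zpow_mul_entry' (n : ℤ) (g : SL2Z) :
    ((ModularGroup.T ^ n * g) : SL2Z).1 0 0 = g.1 0 0 + n * g.1 1 0 := by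
  simp [Matrix.SpecialLinearGroup.coe_mul, ModularGroup.coe_T_zpow, Matrix.mul_apply,
    Fin.sum_univ_succ]

private lemma S_mul_entry' (g : SL2Z) : ((ModularGroup.S * g) : SL2Z).1 1 0 = g.1 0 0 := by
  simp [Matrix.SpecialLinearGroup.coe_mul, ModularGroup.coe_S, Matrix.mul_apply,
    Fin.sum_univ_succ]

private lemma closure_S_T' : Subgroup.closure {ModularGroup.S, ModularGroup.T} = ⊤ := by
  set H := Subgroup.closure {ModularGroup.S, ModularGroup.T} with hH
  have hS : ModularGroup.S ∈ H := Subgroup.subset_closure (by simp)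
  have hT : ModularGroup.T ∈ H := Subgroup.subset_closure (by simp)
  have hTz : ∀ n : ℤ, ModularGroup.T ^ n ∈ H := fun n => H.zpow_mem hT n
  rw [eq_top_iff]
  intro g _
  suffices h : ∀ n : ℕ, ∀ g : SL2Z, (g.1 1 0).natAbs = n → g ∈ H from h _ g rfl
  intro n
  induction n using Nat.strong_induction_on with
  | _ n ih =>
    intro g hg
    rcases eq_or_ne (g.1 1 0) 0 with hc | hc
    · have hdet : g.1 0 0 * g.1 1 1 - g.1 0 1 * g.1 1 0 = 1 := by
        rw [← Matrix.det_fin_two]; exact g.2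
      rw [hc, mul_zero, sub_zero] at hdet
      rcases Int.mul_eq_one_iff_eq_one_or_neg_one.1 hdet with ⟨ha, hd⟩ | ⟨ha, hd⟩
      · have : g = ModularGroup.T ^ (g.1 0 1) := by
          ext i j; fin_cases i <;> fin_cases j <;>
            simp [ModularGroup.coe_T_zpow, ha, hd, hc]
        rw [this]; exact hTz _
      · have : g = ModularGroup.S ^ 2 * ModularGroup.T ^ (-(g.1 0 1)) := by
          ext i j; fin_cases i <;> fin_cases j <;>
            simp [Matrix.SpecialLinearGroup.coe_mul, pow_two, ModularGroup.coe_S,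
              ModularGroup.coe_T_zpow, Matrix.mul_apply, Fin.sum_univ_succ, ha, hd, hc]
        rw [this]; exact H.mul_mem (H.pow_mem hS 2) (hTz _)
    · set c := g.1 1 0 with hc'
      set q := g.1 0 0 / c with hq
      have key : ((ModularGroup.S * (ModularGroup.T ^ (-q) * g)) : SL2Z).1 1 0
          = g.1 0 0 % c := by
        rw [S_mul_entry', T_zpow_mul_entry', Int.emod_def, hq]; ring
      have hlt : (((ModularGroup.S * (ModularGroup.T ^ (-q) * g)) : SL2Z).1 1 0).natAbs < n := by
        rw [key, ← hg]
        have h1 := Int.natAbs_lt_natAbs_of_nonneg_of_lt (Int.emod_nonneg (g.1 0 0) hc)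
          (Int.emod_lt (g.1 0 0) hc)
        rwa [Int.natAbs_natCast] at h1
      have hmem := ih _ hlt (ModularGroup.S * (ModularGroup.T ^ (-q) * g)) rfl
      have heq : g = ModularGroup.T ^ q * (ModularGroup.S⁻¹ *
          (ModularGroup.S * (ModularGroup.T ^ (-q) * g))) := by group
      rw [heq]
      exact H.mul_mem (hTz q) (H.mul_mem (H.inv_mem hS) hmem)

private lemma S_sq_eq' : ModularGroup.S ^ 2 = (ModularGroup.S * ModularGroup.T) ^ 3 := by
  ext i j; fin_cases i <;> fin_cases j <;>
    simp [ModularGroup.coe_S, ModularGroup.coe_T, pow_succ, Matrix.mul_apply, Fin.sum_univ_succ]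

private lemma S_pow_four' : ModularGroup.S ^ 4 = 1 := by
  ext i j; fin_cases i <;> fin_cases j <;>
    simp [ModularGroup.coe_S, pow_succ, Matrix.mul_apply, Fin.sum_univ_succ]

/-- image of the generators generate. -/
private lemma closure_image' {G : Type} [Group G] (f : SL2Z →* G)
    (hf : Function.Surjective f) :
    Subgroup.closure {f ModularGroup.S, f ModularGroup.T} = ⊤ := by
  have : Subgroup.closure ({f ModularGroup.S, f ModularGroup.T} : Set G)
      = Subgroup.map f (Subgroup.closure {ModularGroup.S, ModularGroup.T}) := by
    rw [MonoidHom.map_closure, Set.image_pair]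
  rw [this, closure_S_T', ← MonoidHom.range_eq_map,
    MonoidHom.range_eq_top.2 hf]

private lemma cyclic_of_gen_mem' {G : Type} [Group G] {a b : G}
    (h : Subgroup.closure {a, b} = ⊤) (ha : a ∈ Subgroup.zpowers b) : IsCyclic G := by
  refine ⟨⟨b, fun x => ?_⟩⟩
  have hx : x ∈ Subgroup.closure ({a, b} : Set G) := h ▸ Subgroup.mem_top x
  have hle : Subgroup.closure ({a, b} : Set G) ≤ Subgroup.zpowers b := by
    rw [Subgroup.closure_le]
    rintro y (rfl | rfl)
    · exact ha
    · exact Subgroup.mem_zpowers _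
  exact hle hx

private lemma cyclic_of_comm' {G : Type} [Group G] (f : SL2Z →* G)
    (hf : Function.Surjective f) (hcomm : ∀ a b : G, a * b = b * a) : IsCyclic G := by
  set s := f ModularGroup.S
  set t := f ModularGroup.T
  have hrel : s ^ 2 = (s * t) ^ 3 := by
    have := congrArg f S_sq_eq'
    simpa [map_pow, _root_.map_mul] using this
  have hst : (s * t) ^ 3 = s ^ 3 * t ^ 3 := Commute.mul_pow (hcomm s t) 3
  have h3 : s ^ 2 = s ^ 3 * t ^ 3 := hrel.trans hst
  have h1 : s * t ^ 3 = 1 := by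
    calc s * t ^ 3 = s ^ (-2 : ℤ) * (s ^ 3 * t ^ 3) := by group
    _ = s ^ (-2 : ℤ) * s ^ 2 := by rw [← h3]
    _ = 1 := by group
  have hs : s = (t ^ 3)⁻¹ := eq_inv_of_mul_eq_one_left h1
  have hz : t ^ (-3 : ℤ) = (t ^ 3)⁻¹ := by
    rw [_root_.zpow_neg]; norm_cast
  exact cyclic_of_gen_mem' (closure_image' f hf) ⟨-3, hz.trans hs.symm⟩

/-- The smallest non-cyclic quotient of `SL(2,ℤ)` has order at least `6`, and any
non-cyclic quotient of order `6` is isomorphic to `S_3`. -/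
theorem sl2z_smallest_noncyclic_quotient
    (G : Type) [Group G] [Finite G]
    (f : Matrix.SpecialLinearGroup (Fin 2) ℤ →* G) (hf : Function.Surjective f)
    (hG : ¬ IsCyclic G) :
    6 ≤ Nat.card G ∧ (Nat.card G = 6 → Nonempty (G ≃* Equiv.Perm (Fin 3))) := by
  set s := f ModularGroup.S with hsdef
  set t := f ModularGroup.T with htdef
  have hncomm : ¬ ∀ a b : G, a * b = b * a := fun h => hG (cyclic_of_comm' f hf h)
  have hclos := closure_image' f hf
  have hrel : s ^ 2 = (s * t) ^ 3 := by
    simpa [map_pow, _root_.map_mul] using congrArg f S_sq_eq'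
  have hs4 : s ^ 4 = 1 := by simpa [map_pow] using congrArg f S_pow_four'
  have hs1 : s ≠ 1 := by
    intro h
    refine hG (cyclic_of_gen_mem' hclos ?_)
    rw [← hsdef, ← htdef, h]
    exact (Subgroup.zpowers t).one_mem
  have part1 : 6 ≤ Nat.card G := by
    by_contra hlt
    push_neg at hlt
    have hpos : 0 < Nat.card G := Nat.card_pos
    have hcases : Nat.card G = 1 ∨ Nat.card G = 2 ∨ Nat.card G = 3 ∨ Nat.card G = 4 ∨
        Nat.card G = 5 := by omega
    rcases hcases with h | h | h | h | h
    · haveI : Subsingleton G := (Nat.card_eq_one_iff_unique.mp h).1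
      exact hG isCyclic_of_subsingleton
    · haveI : Fact (Nat.Prime 2) := ⟨Nat.prime_two⟩
      exact hG (isCyclic_of_prime_card h)
    · haveI : Fact (Nat.Prime 3) := ⟨Nat.prime_three⟩
      exact hG (isCyclic_of_prime_card h)
    · apply hncomm
      have h2 : ∀ g : G, g ^ 2 = 1 := by
        intro g
        have hdvd : orderOf g ∣ 4 := h ▸ orderOf_dvd_natCard g
        have hne : orderOf g ≠ 4 := by
          intro h4
          exact hG (isCyclic_of_orderOf_eq_card g (h4.trans h.symm))
        have h1 : 0 < orderOf g := orderOf_pos g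
        have h4' : orderOf g ≤ 4 := Nat.le_of_dvd (by norm_num) hdvd
        rw [← orderOf_dvd_iff_pow_eq_one]
        interval_cases hx : orderOf g
        · exact one_dvd 2
        · exact dvd_rfl
        · exact absurd hdvd (by norm_num)
        · exact absurd rfl hne
      have hinv : ∀ g : G, g⁻¹ = g := fun g =>
        inv_eq_of_mul_eq_one_right (by rw [← sq]; exact h2 g)
      intro a b
      calc a * b = (a * b)⁻¹ := (hinv _).symm
      _ = b⁻¹ * a⁻¹ := mul_inv_rev a b
      _ = b * a := by rw [hinv, hinv]
    · haveI : Fact (Nat.Prime 5) := ⟨by norm_num⟩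
      exact hG (isCyclic_of_prime_card h)
  refine ⟨part1, fun hcard => ?_⟩
  set u := s * t with hu
  have hsord : orderOf s = 2 := by
    have hdvd2 : orderOf s ∣ 2 := by
      have h1 := Nat.dvd_gcd (orderOf_dvd_of_pow_eq_one hs4)
        (hcard ▸ orderOf_dvd_natCard s)
      simpa using h1
    rcases (Nat.dvd_prime Nat.prime_two).1 hdvd2 with h1 | h1
    · exact absurd (orderOf_eq_one_iff.mp h1) hs1
    · exact h1
  have hs2 : s ^ 2 = 1 := by rw [← hsord]; exact pow_orderOf_eq_one s
  have hsinv : s⁻¹ = s := inv_eq_of_mul_eq_one_right (by rw [← sq]; exact hs2)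
  have hu3 : u ^ 3 = 1 := by rw [hu, ← hrel, hs2]
  have hu1 : u ≠ 1 := by
    intro h
    have hst : s = t⁻¹ := eq_inv_of_mul_eq_one_left h
    refine hG (cyclic_of_gen_mem' hclos ?_)
    rw [← hsdef, ← htdef, hst]
    exact (Subgroup.zpowers t).inv_mem (Subgroup.mem_zpowers t)
  have huord : orderOf u = 3 := by
    rcases (Nat.dvd_prime Nat.prime_three).1 (orderOf_dvd_of_pow_eq_one hu3) with h1 | h1
    · exact absurd (orderOf_eq_one_iff.mp h1) hu1
    · exact h1
  have hsu : s * u ≠ u * s := by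
    intro h
    have h6 : orderOf (s * u) = 6 := by
      have := Commute.orderOf_mul_eq_mul_orderOf_of_coprime (x := s) (y := u) h
        (by rw [hsord, huord]; norm_num)
      rw [this, hsord, huord]
    exact hG (isCyclic_of_orderOf_eq_card (s * u) (h6.trans hcard.symm))
  set H := Subgroup.zpowers s with hH
  have hmemH : ∀ g : G, g ∈ H → g = 1 ∨ g = s := by
    rintro g ⟨n, rfl⟩
    rcases Int.even_or_odd n with ⟨k, hk⟩ | ⟨k, hk⟩
    · left
      show s ^ n = 1
      have h7 : n = 2 * k := by omega
      rw [h7, _root_.zpow_mul, show (s ^ (2 : ℤ)) = s ^ 2 by norm_cast, hs2, _root_.one_zpow]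
    · right
      show s ^ n = s
      rw [hk, _root_.zpow_add, _root_.zpow_mul, zpow_one,
        show (s ^ (2 : ℤ)) = s ^ 2 by norm_cast, hs2, _root_.one_zpow, one_mul]
  haveI : Finite (G ⧸ H) := Quotient.finite _
  set φ := MulAction.toPermHom G (G ⧸ H) with hφ
  have hker : ∀ g : G, (∀ q : G ⧸ H, g • q = q) → g = 1 := by
    intro g hg
    have h1 := hg ((1 : G) : G ⧸ H)
    rw [MulAction.Quotient.smul_coe, smul_eq_mul, mul_one] at h1
    have hgH : g ∈ H := by
      have h2 := QuotientGroup.eq.mp h1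
      rw [mul_one] at h2
      exact (H.inv_mem_iff).mp h2
    rcases hmemH g hgH with h2 | h2
    · exact h2
    · exfalso
      have h3 := hg ((u : G) : G ⧸ H)
      rw [MulAction.Quotient.smul_coe, smul_eq_mul] at h3
      have h4 : (g * u)⁻¹ * u ∈ H := QuotientGroup.eq.mp h3
      have h5 : u⁻¹ * s * u ∈ H := by
        have he : (g * u)⁻¹ * u = u⁻¹ * g⁻¹ * u := by group
        rw [he, h2, hsinv] at h4
        exact h4
      rcases hmemH _ h5 with h6 | h6
      · apply hs1
        have h7 : s = u * (u⁻¹ * s * u) * u⁻¹ := by group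
        rw [h6] at h7
        simpa using h7
      · apply hsu
        have h7 : s * u = u * (u⁻¹ * s * u) := by group
        rw [h6] at h7
        exact h7
  have hinj : Function.Injective φ := by
    rw [← MonoidHom.ker_eq_bot_iff, eq_bot_iff]
    intro g hg
    rw [MonoidHom.mem_ker] at hg
    have : g = 1 := hker g fun q => by
      have := Equiv.ext_iff.1 hg q
      simpa [hφ, MulAction.toPermHom] using this
    simpa using this
  have hHcard : Nat.card H = 2 := by rw [hH, Nat.card_zpowers, hsord]
  have hq3 : Nat.card (G ⧸ H) = 3 := by
    have h1 := Subgroup.card_eq_card_quotient_mul_card_subgroup H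
    rw [hcard, hHcard] at h1; omega
  obtain ⟨e⟩ : Nonempty (G ⧸ H ≃ Fin 3) := by
    apply Finite.card_eq.mp; simp [hq3]
  let ψ : Equiv.Perm (G ⧸ H) ≃* Equiv.Perm (Fin 3) :=
    { Equiv.permCongr e with
      map_mul' := fun p q => by ext x; simp [Equiv.permCongr_apply] }
  let χ : G →* Equiv.Perm (Fin 3) := ψ.toMonoidHom.comp φ
  have hχinj : Function.Injective χ := fun a b hab => hinj (ψ.injective hab)
  have hbij : Function.Bijective χ := (Nat.bijective_iff_injective_and_card χ).2
    ⟨hχinj, by rw [hcard]; simp [Nat.card_eq_fintype_card, Fintype.card_perm, Nat.factorial]⟩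
  exact ⟨MulEquiv.ofBijective χ hbij⟩
end

section
/- Let B_3 be the braid group on 3 strands. Any two surjective group homomorphisms f, f' : B_3 → Equiv.Perm (Fin 3) are related by a conjugation of S_3: there exists g ∈ Equiv.Perm (Fin 3) such that f'(b) = g * f(b) * g⁻¹ for all b ∈ B_3. -/
section BraidAux

set_option synthInstance.maxHeartbeats 1000000 in
set_option synthInstance.maxSize 2000 in
set_option maxHeartbeats 4000000 in
private lemma braid_conj_key :
    ∀ a b a' b' : Equiv.Perm (Fin 3),
      Equiv.Perm.sign a = -1 → Equiv.Perm.sign b = -1 →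
      Equiv.Perm.sign a' = -1 → Equiv.Perm.sign b' = -1 →
      a ≠ b → a' ≠ b' →
      ∃ g : Equiv.Perm (Fin 3), a' = g * a * g⁻¹ ∧ b' = g * b * g⁻¹ := by decide

private lemma braid_sq_one :
    ∀ a : Equiv.Perm (Fin 3), Equiv.Perm.sign a = -1 → a * a = 1 := by decide

private lemma braid_exists_third :
    ∀ a : Equiv.Perm (Fin 3), ∃ c : Equiv.Perm (Fin 3), c ≠ 1 ∧ c ≠ a := by decide

private lemma braid_not_all_even :
    ¬ (∀ x : Equiv.Perm (Fin 3), Equiv.Perm.sign x = 1) := by decide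

/-- The braid relation holds in `B₃`. -/
private lemma braid_rel3 :
    (PresentedGroup.of (0 : Fin (3-1)) : BraidGroup 3) * PresentedGroup.of 1 *
      PresentedGroup.of 0 =
    PresentedGroup.of 1 * PresentedGroup.of 0 * PresentedGroup.of 1 := by
  rw [← mul_inv_eq_one]
  have hr : (FreeGroup.of (0 : Fin (3-1)) * FreeGroup.of 1 * FreeGroup.of 0 *
      (FreeGroup.of 1 * FreeGroup.of 0 * FreeGroup.of 1)⁻¹) ∈ braidRels 3 :=
    Or.inl ⟨0, 1, rfl, rfl⟩
  have h1 : PresentedGroup.mk (braidRels 3)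
      (FreeGroup.of (0 : Fin (3-1)) * FreeGroup.of 1 * FreeGroup.of 0 *
        (FreeGroup.of 1 * FreeGroup.of 0 * FreeGroup.of 1)⁻¹) = 1 :=
    (QuotientGroup.eq_one_iff _).mpr (Subgroup.subset_normalClosure hr)
  exact h1

/-- The range of a hom out of `B₃` is generated by the images of the two generators. -/
private lemma braid_range_eq (f : BraidGroup 3 →* Equiv.Perm (Fin 3)) :
    f.range = Subgroup.closure
      {f (PresentedGroup.of (0 : Fin (3-1))), f (PresentedGroup.of 1)} := by
  have h : Subgroup.closure (Set.range (PresentedGroup.of : Fin (3-1) → BraidGroup 3)) = ⊤ :=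
    PresentedGroup.closure_range_of (braidRels 3)
  erw [MonoidHom.range_eq_map, ← h, MonoidHom.map_closure]
  congr 1
  erw [← Set.range_comp]
  ext y
  simp only [Set.mem_range, Function.comp_apply, Set.mem_insert_iff, Set.mem_singleton_iff]
  constructor
  · rintro ⟨i, rfl⟩
    fin_cases i
    exacts [Or.inl rfl, Or.inr rfl]
  · rintro (rfl | rfl)
    exacts [⟨0, rfl⟩, ⟨1, rfl⟩]

/-- From surjectivity and the braid relation, the images of the generators are
distinct odd permutations. -/
private lemma braid_gen_images (f : BraidGroup 3 →* Equiv.Perm (Fin 3))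
    (hf : Function.Surjective f) :
    Equiv.Perm.sign (f (PresentedGroup.of (0 : Fin (3-1)))) = -1 ∧
    Equiv.Perm.sign (f (PresentedGroup.of (1 : Fin (3-1)))) = -1 ∧
    f (PresentedGroup.of (0 : Fin (3-1))) ≠ f (PresentedGroup.of 1) := by
  set a := f (PresentedGroup.of (0 : Fin (3-1))) with ha
  set b := f (PresentedGroup.of (1 : Fin (3-1))) with hb
  have hrel : a * b * a = b * a * b := by
    have := congrArg f braid_rel3
    erw [map_mul, map_mul, map_mul, map_mul] at this
    exact this
  have htop : f.range = ⊤ := MonoidHom.range_eq_top.mpr hf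
  have hcl : Subgroup.closure ({a, b} : Set (Equiv.Perm (Fin 3))) = ⊤ := by
    rw [← braid_range_eq f, htop]
  -- signs are equal
  have hsigneq : Equiv.Perm.sign a = Equiv.Perm.sign b := by
    have := congrArg Equiv.Perm.sign hrel
    simp only [map_mul] at this
    rcases Int.units_eq_one_or (Equiv.Perm.sign a) with h1 | h1 <;>
      rcases Int.units_eq_one_or (Equiv.Perm.sign b) with h2 | h2 <;>
      rw [h1, h2] at this ⊢ <;> revert this <;> decide
  -- signs are -1
  have hsa : Equiv.Perm.sign a = -1 := by
    by_contra hne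
    have ha1 : Equiv.Perm.sign a = 1 := (Int.units_eq_one_or _).resolve_right hne
    have hb1 : Equiv.Perm.sign b = 1 := hsigneq ▸ ha1
    have hker : Subgroup.closure ({a, b} : Set (Equiv.Perm (Fin 3))) ≤
        Equiv.Perm.sign.ker := by
      rw [Subgroup.closure_le]
      rintro x (rfl | rfl)
      exacts [ha1, hb1]
    rw [hcl] at hker
    exact braid_not_all_even fun x =>
      MonoidHom.mem_ker.mp (hker (Subgroup.mem_top x))
  have hsb : Equiv.Perm.sign b = -1 := hsigneq ▸ hsa
  -- distinct
  refine ⟨hsa, hsb, ?_⟩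
  intro hab
  have hsq : a * a = 1 := braid_sq_one a hsa
  obtain ⟨c, hc1, hca⟩ := braid_exists_third a
  have hc : c ∈ Subgroup.closure ({a, b} : Set (Equiv.Perm (Fin 3))) := by
    rw [hcl]; exact Subgroup.mem_top c
  rw [← hab, Set.pair_eq_singleton] at hc
  obtain ⟨n, hn⟩ := Subgroup.mem_closure_singleton.mp hc
  have hsq2 : a ^ (2:ℤ) = 1 := by
    rw [zpow_two]; exact hsq
  obtain ⟨k, hk | hk⟩ := Int.even_or_odd' n
  · rw [hk, zpow_mul, hsq2, one_zpow] at hn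
    exact hc1 hn.symm
  · rw [hk, zpow_add, zpow_mul, hsq2, one_zpow, one_mul, zpow_one] at hn
    exact hca hn.symm

end BraidAux

/-- Any two epimorphisms `B_3 → S_3` are related by a conjugation of `S_3`. -/
theorem braid_three_epimorphisms_to_perm_three_conjugate
    (f f' : BraidGroup 3 →* Equiv.Perm (Fin 3))
    (hf : Function.Surjective f) (hf' : Function.Surjective f') :
    ∃ g : Equiv.Perm (Fin 3), ∀ b : BraidGroup 3, f' b = g * f b * g⁻¹ := by
  obtain ⟨hsa, hsb, hab⟩ := braid_gen_images f hf
  obtain ⟨hsa', hsb', hab'⟩ := braid_gen_images f' hf'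
  obtain ⟨g, hg1, hg2⟩ := braid_conj_key _ _ _ _ hsa hsb hsa' hsb' hab hab'
  refine ⟨g, ?_⟩
  have hhom : f' = (MulAut.conj g).toMonoidHom.comp f := by
    apply PresentedGroup.ext
    intro x
    fin_cases x
    · exact hg1
    · exact hg2
  intro b
  rw [hhom]
  simp [MulAut.conj_apply]
end

section
/- Let B_4 be the braid group on 4 strands. Any two surjective group homomorphisms f, f' : B_4 → Equiv.Perm (Fin 3) are related by a conjugation of S_3: there exists g ∈ Equiv.Perm (Fin 3) such that f'(b) = g * f(b) * g⁻¹ for all b ∈ B_4. -/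
/-- Relators of a presented group are killed by any homomorphism out of it. -/
lemma BraidAux.lift_eq_one {n : ℕ} {G : Type*} [Group G] (f : BraidGroup n →* G) :
    ∀ r ∈ braidRels n,
      FreeGroup.lift (fun i => f (PresentedGroup.of (rels := braidRels n) i)) r = 1 := by
  intro r hr
  have h1 : FreeGroup.lift (fun i => f (PresentedGroup.of (rels := braidRels n) i)) =
      (f.comp (PresentedGroup.mk (braidRels n))) := by
    apply FreeGroup.ext_hom
    intro i
    rw [FreeGroup.lift_apply_of]
    rfl
  rw [h1]
  show f ((PresentedGroup.mk (braidRels n)) r) = 1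
  have h2 : (PresentedGroup.mk (braidRels n)) r = 1 := by
    have : (QuotientGroup.mk r : PresentedGroup (braidRels n)) = 1 := by
      rw [QuotientGroup.eq_one_iff]
      exact Subgroup.subset_normalClosure hr
    exact this
  exact (congrArg f h2).trans (map_one f)

set_option synthInstance.maxSize 1000 in
lemma BraidAux.classify : ∀ a b c : Equiv.Perm (Fin 3),
    a * b * a = b * a * b ∧ b * c * b = c * b * c ∧ a * c = c * a →
    (a = b ∧ b = c) ∨ (a = c ∧ a * a = 1 ∧ b * b = 1 ∧ a ≠ b) := by decide

set_option synthInstance.maxSize 1000 in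
set_option maxHeartbeats 1000000 in
lemma BraidAux.conj : ∀ a b a' b' : Equiv.Perm (Fin 3),
    a * b * a = b * a * b ∧ a * a = 1 ∧ b * b = 1 ∧ a ≠ b →
    a' * b' * a' = b' * a' * b' ∧ a' * a' = 1 ∧ b' * b' = 1 ∧ a' ≠ b' →
    ∃ g : Equiv.Perm (Fin 3), a' = g * a * g⁻¹ ∧ b' = g * b * g⁻¹ := by decide

/-- The images of the generators under a hom `B₄ → S₃` satisfy the braid relations. -/
lemma BraidAux.rels4 {G : Type*} [Group G] (f : BraidGroup 4 →* G)
    (a : Fin 3 → G) (ha : a = fun i => f (PresentedGroup.of (rels := braidRels 4) i)) :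
    a 0 * a 1 * a 0 = a 1 * a 0 * a 1 ∧ a 1 * a 2 * a 1 = a 2 * a 1 * a 2 ∧
      a 0 * a 2 = a 2 * a 0 := by
  subst ha
  refine ⟨?_, ?_, ?_⟩
  · have h := BraidAux.lift_eq_one f
      (FreeGroup.of 0 * FreeGroup.of 1 * FreeGroup.of 0 *
        (FreeGroup.of 1 * FreeGroup.of 0 * FreeGroup.of 1)⁻¹)
      (Or.inl ⟨0, 1, rfl, rfl⟩)
    simpa only [map_mul, map_inv, FreeGroup.lift_apply_of, mul_inv_eq_one] using h
  · have h := BraidAux.lift_eq_one f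
      (FreeGroup.of 1 * FreeGroup.of 2 * FreeGroup.of 1 *
        (FreeGroup.of 2 * FreeGroup.of 1 * FreeGroup.of 2)⁻¹)
      (Or.inl ⟨1, 2, rfl, rfl⟩)
    simpa only [map_mul, map_inv, FreeGroup.lift_apply_of, mul_inv_eq_one] using h
  · have h := BraidAux.lift_eq_one f
      (FreeGroup.of 0 * FreeGroup.of 2 * (FreeGroup.of 2 * FreeGroup.of 0)⁻¹)
      (Or.inr ⟨0, 2, le_refl 2, rfl⟩)
    simpa only [map_mul, map_inv, FreeGroup.lift_apply_of, mul_inv_eq_one] using h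

/-- A surjection `B₄ → S₃` cannot send all generators to a single element. -/
lemma BraidAux.not_all_eq (f : BraidGroup 4 →* Equiv.Perm (Fin 3))
    (hf : Function.Surjective f)
    (h01 : f (PresentedGroup.of (rels := braidRels 4) 0) =
           f (PresentedGroup.of (rels := braidRels 4) 1))
    (h12 : f (PresentedGroup.of (rels := braidRels 4) 1) =
           f (PresentedGroup.of (rels := braidRels 4) 2)) : False := by
  have hcl : Subgroup.closure
      (Set.range (⇑f ∘ PresentedGroup.of (rels := braidRels 4))) = ⊤ := by
    erw [Set.range_comp, ← MonoidHom.map_closure, PresentedGroup.closure_range_of,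
      ← MonoidHom.range_eq_map]
    exact MonoidHom.range_eq_top.mpr hf
  have hsub : Set.range (⇑f ∘ PresentedGroup.of (rels := braidRels 4)) ⊆
      {f (PresentedGroup.of (rels := braidRels 4) 0)} := by
    rintro x ⟨i, rfl⟩
    have : ∀ i : Fin 3, f (PresentedGroup.of (rels := braidRels 4) i) =
        f (PresentedGroup.of (rels := braidRels 4) 0) := by
      intro i
      fin_cases i
      · rfl
      · exact h01.symm
      · exact (h01.trans h12).symm
    exact Set.mem_singleton_iff.mpr (this i)
  set s := f (PresentedGroup.of (rels := braidRels 4) 0) with hs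
  have hle : (⊤ : Subgroup (Equiv.Perm (Fin 3))) ≤ Subgroup.zpowers s := by
    rw [← hcl, Subgroup.zpowers_eq_closure]
    exact Subgroup.closure_mono hsub
  obtain ⟨k, hk⟩ := Subgroup.mem_zpowers_iff.mp (hle (Subgroup.mem_top (Equiv.swap 0 1)))
  obtain ⟨m, hm⟩ := Subgroup.mem_zpowers_iff.mp (hle (Subgroup.mem_top (Equiv.swap 0 2)))
  have hcomm : Equiv.swap (0 : Fin 3) 1 * Equiv.swap 0 2 =
      Equiv.swap 0 2 * Equiv.swap (0 : Fin 3) 1 := by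
    rw [← hk, ← hm]
    exact ((Commute.refl s).zpow_zpow k m).eq
  revert hcomm
  decide

/-- Any two epimorphisms `B_4 → S_3` are related by a conjugation of `S_3`. -/
theorem braid_four_epimorphisms_to_perm_three_conjugate
    (f f' : BraidGroup 4 →* Equiv.Perm (Fin 3))
    (hf : Function.Surjective f) (hf' : Function.Surjective f') :
    ∃ g : Equiv.Perm (Fin 3), ∀ b : BraidGroup 4, f' b = g * f b * g⁻¹ := by
  set a : Fin 3 → Equiv.Perm (Fin 3) :=
    fun i => f (PresentedGroup.of (rels := braidRels 4) i) with ha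
  set a' : Fin 3 → Equiv.Perm (Fin 3) :=
    fun i => f' (PresentedGroup.of (rels := braidRels 4) i) with ha'
  obtain ⟨hr1, hr2, hr3⟩ := BraidAux.rels4 f a ha
  obtain ⟨hr1', hr2', hr3'⟩ := BraidAux.rels4 f' a' ha'
  rcases BraidAux.classify (a 0) (a 1) (a 2) ⟨hr1, hr2, hr3⟩ with ⟨h01, h12⟩ | hgen
  · exact absurd (BraidAux.not_all_eq f hf h01 h12) not_false
  rcases BraidAux.classify (a' 0) (a' 1) (a' 2) ⟨hr1', hr2', hr3'⟩ with ⟨h01, h12⟩ | hgen'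
  · exact absurd (BraidAux.not_all_eq f' hf' h01 h12) not_false
  obtain ⟨hac, haa, hbb, hab⟩ := hgen
  obtain ⟨hac', haa', hbb', hab'⟩ := hgen'
  obtain ⟨g, hg0, hg1⟩ := BraidAux.conj (a 0) (a 1) (a' 0) (a' 1)
    ⟨hr1, haa, hbb, hab⟩ ⟨hr1', haa', hbb', hab'⟩
  refine ⟨g, ?_⟩
  have hφ : ∀ b : BraidGroup 4, f' b = ((MulAut.conj g).toMonoidHom.comp f) b := by
    intro b
    have heq : Set.EqOn (⇑f') (⇑((MulAut.conj g).toMonoidHom.comp f))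
        (Set.range (PresentedGroup.of (rels := braidRels 4))) := by
      rintro x ⟨i, rfl⟩
      show f' (PresentedGroup.of i) = g * f (PresentedGroup.of i) * g⁻¹
      fin_cases i
      · exact hg0
      · exact hg1
      · show a' 2 = g * a 2 * g⁻¹
        rw [← hac, ← hac']
        exact hg0
    have := MonoidHom.eqOn_closure heq
    erw [PresentedGroup.closure_range_of] at this
    exact this (Subgroup.mem_top b)
  intro b
  rw [hφ b]
  rfl
end

section
/- Let n ≥ 5, let B_n be the braid group on n strands, and let f : B_n → G be a group homomorphism into a group G whose range is not cyclic. Then the n(n−1)/2 images f(ρ_{i,j}) of the Birman–Ko–Lee generators are pairwise distinct: for 1 ≤ i < j ≤ n and 1 ≤ k < l ≤ n with (i,j) ≠ (k,l), one has f(ρ_{i,j}) ≠ f(ρ_{k,l}). -/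
/-- The conjugating word `σ_{j-1} σ_{j-2} ⋯ σ_{i+1}` (1-indexed) appearing in the
definition of the Birman--Ko--Lee generators. -/
def bklWord (n i j : ℕ) : BraidGroup n :=
  ((List.range (j - i - 1)).map fun t => braidGen n (j - 1 - t)).prod

/-- The Birman--Ko--Lee generator `ρ_{i,j} = (σ_{j-1} ⋯ σ_{i+1}) σ_i (σ_{j-1} ⋯ σ_{i+1})⁻¹`
of the braid group `B_n` (1-indexed, `1 ≤ i < j ≤ n`).  Note `ρ_{i,i+1} = σ_i`. -/
def bklGen (n i j : ℕ) : BraidGroup n :=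
  bklWord n i j * braidGen n i * (bklWord n i j)⁻¹


lemma relOne {α : Type*} {rels : Set (FreeGroup α)} {r : FreeGroup α} (h : r ∈ rels) :
    PresentedGroup.mk rels r = 1 := by
  have : r ∈ Subgroup.normalClosure rels := Subgroup.subset_normalClosure h
  exact (QuotientGroup.eq_one_iff r).mpr this

lemma braidGen_eq (n k : ℕ) (h : k - 1 < n - 1) :
    braidGen n k = PresentedGroup.mk (braidRels n) (FreeGroup.of (⟨k - 1, h⟩ : Fin (n - 1))) := by
  simp [braidGen, h]; rfl

lemma braid_rel (n i : ℕ) (h1 : 1 ≤ i) (h2 : i + 2 ≤ n) :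
    braidGen n i * braidGen n (i+1) * braidGen n i
      = braidGen n (i+1) * braidGen n i * braidGen n (i+1) := by
  have hi : i - 1 < n - 1 := by omega
  have hj : (i+1) - 1 < n - 1 := by omega
  rw [braidGen_eq n i hi, braidGen_eq n (i+1) hj]
  have hmem : (FreeGroup.of (⟨i-1, hi⟩ : Fin (n-1)) * FreeGroup.of (⟨(i+1)-1, hj⟩ : Fin (n-1))
      * FreeGroup.of (⟨i-1, hi⟩ : Fin (n-1)) *
      (FreeGroup.of (⟨(i+1)-1, hj⟩ : Fin (n-1)) * FreeGroup.of (⟨i-1, hi⟩ : Fin (n-1))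
      * FreeGroup.of (⟨(i+1)-1, hj⟩ : Fin (n-1)))⁻¹) ∈ braidRels n := by
    left
    exact ⟨⟨i-1, hi⟩, ⟨(i+1)-1, hj⟩, by simp; omega, rfl⟩
  have := relOne hmem
  simp only [map_mul, map_inv] at this
  rw [mul_inv_eq_one] at this
  exact this

lemma comm_rel (n i j : ℕ) (h1 : 1 ≤ i) (h2 : i + 2 ≤ j) (h3 : j ≤ n - 1) :
    Commute (braidGen n i) (braidGen n j) := by
  have hi : i - 1 < n - 1 := by omega
  have hj : j - 1 < n - 1 := by omega
  rw [braidGen_eq n i hi, braidGen_eq n j hj]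
  have hmem : (FreeGroup.of (⟨i-1, hi⟩ : Fin (n-1)) * FreeGroup.of (⟨j-1, hj⟩ : Fin (n-1)) *
      (FreeGroup.of (⟨j-1, hj⟩ : Fin (n-1)) * FreeGroup.of (⟨i-1, hi⟩ : Fin (n-1)))⁻¹) ∈
      braidRels n := by
    right
    exact ⟨⟨i-1, hi⟩, ⟨j-1, hj⟩, by simp; omega, rfl⟩
  have := relOne hmem
  simp only [map_mul, map_inv] at this
  rw [mul_inv_eq_one] at this
  exact this

lemma bklWord_base (n i : ℕ) : bklWord n i (i+1) = 1 := by
  simp [bklWord]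

lemma bklWord_degen (n i j : ℕ) (h : j ≤ i + 1) : bklWord n i j = 1 := by
  have : j - i - 1 = 0 := by omega
  simp [bklWord, this]

lemma bklWord_succ (n i j : ℕ) (h : i + 1 ≤ j) :
    bklWord n i (j+1) = braidGen n j * bklWord n i j := by
  have h1 : j + 1 - i - 1 = (j - i - 1) + 1 := by omega
  rw [bklWord, h1, List.range_succ_eq_map, List.map_cons, List.prod_cons, List.map_map]
  refine congrArg₂ (· * ·) ?_ ?_
  · show braidGen n (j + 1 - 1 - 0) = braidGen n j
    congr 1
  · rw [bklWord]
    refine congrArg List.prod ?_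
    apply List.map_congr_left
    intro t ht
    simp only [Function.comp_apply]
    congr 1
    simp only [List.mem_range] at ht
    omega

lemma bklWord_succ_right (n i j : ℕ) (h : i + 2 ≤ j) :
    bklWord n i j = bklWord n (i+1) j * braidGen n (i+1) := by
  have h1 : j - i - 1 = (j - (i+1) - 1) + 1 := by omega
  rw [bklWord, h1, List.range_succ, List.map_append, List.prod_append,
    List.map_cons, List.map_nil, List.prod_cons, List.prod_nil, mul_one]
  refine congrArg₂ (· * ·) ?_ ?_
  · rw [bklWord]
  · congr 1
    omega

lemma bklWord_split (n i m : ℕ) (him : i ≤ m) :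
    ∀ j, m + 1 ≤ j → bklWord n i j = bklWord n m j * bklWord n i (m+1) := by
  intro j
  induction j with
  | zero => omega
  | succ j ih =>
    intro hj
    rcases Nat.lt_or_ge m j with hmj | hmj
    · rw [bklWord_succ n i j (by omega), bklWord_succ n m j (by omega), ih (by omega), mul_assoc]
    · have : m = j := by omega
      subst this
      rw [bklWord_base, one_mul]

lemma bklGen_base (n i : ℕ) : bklGen n i (i+1) = braidGen n i := by
  simp [bklGen, bklWord_base]

lemma bklGen_two (n i : ℕ) :
    bklGen n i (i+2) = braidGen n (i+1) * braidGen n i * (braidGen n (i+1))⁻¹ := by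
  have h : bklWord n i (i+2) = braidGen n (i+1) := by
    have := bklWord_succ n i (i+1) (by omega)
    rw [bklWord_base, mul_one] at this
    exact this
  simp [bklGen, h]

/-- conjugation helper -/
def cj {n : ℕ} (g x : BraidGroup n) : BraidGroup n := g * x * g⁻¹

lemma cj_cj {n : ℕ} (g h x : BraidGroup n) : cj g (cj h x) = cj (g * h) x := by
  simp [cj, mul_assoc]

lemma cj_eq_of_commute {n : ℕ} {g x : BraidGroup n} (h : Commute g x) : cj g x = x := by
  rw [cj, h.eq, mul_inv_cancel_right]

lemma bklGen_eq_cj (n i j : ℕ) : bklGen n i j = cj (bklWord n i j) (braidGen n i) := rfl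

lemma commute_word (n k i j : ℕ)
    (hcomm : ∀ t, i + 1 ≤ t → t + 1 ≤ j → Commute (braidGen n k) (braidGen n t)) :
    Commute (braidGen n k) (bklWord n i j) := by
  apply Commute.list_prod_right
  intro x hx
  simp only [List.mem_map, List.mem_range] at hx
  obtain ⟨t, ht, rfl⟩ := hx
  exact hcomm (j - 1 - t) (by omega) (by omega)

lemma comm_gen (n k t : ℕ) (hk : 1 ≤ k) (ht : 1 ≤ t) (hkn : k ≤ n - 1) (htn : t ≤ n - 1)
    (hd : k + 2 ≤ t ∨ t + 2 ≤ k) : Commute (braidGen n k) (braidGen n t) := by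
  rcases hd with hd | hd
  · exact comm_rel n k t hk hd htn
  · exact (comm_rel n t k ht hd hkn).symm

/-- Lemma A: far commutation with a BKL generator. -/
lemma commute_bkl_far (n k i j : ℕ) (hk : 1 ≤ k) (hi : 1 ≤ i) (hij : i < j) (hjn : j ≤ n)
    (hkn : k ≤ n - 1) (hside : k + 2 ≤ i ∨ j + 1 ≤ k) :
    Commute (braidGen n k) (bklGen n i j) := by
  have hw : Commute (braidGen n k) (bklWord n i j) := by
    apply commute_word
    intro t ht htj
    exact comm_gen n k t hk (by omega) hkn (by omega) (by omega)
  have hg : Commute (braidGen n k) (braidGen n i) :=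
    comm_gen n k i hk hi hkn (by omega) (by omega)
  exact (hw.mul_right hg).mul_right hw.inv_right

/-- Lemma B: commutation with a BKL generator whose band strictly encloses `k, k+1`. -/
lemma commute_bkl_inside (n k i j : ℕ) (hi : 1 ≤ i) (hik : i < k) (hkj : k + 1 < j)
    (hjn : j ≤ n) : Commute (braidGen n k) (bklGen n i j) := by
  have hk1 : 1 ≤ k := by omega
  have hw : bklWord n i j = bklWord n (k+1) j * bklWord n i (k+2) :=
    bklWord_split n i (k+1) (by omega) j (by omega)
  have hw2 : bklWord n i (k+2) = braidGen n (k+1) * bklWord n i (k+1) :=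
    bklWord_succ n i (k+1) (by omega)
  have hw3 : bklWord n i (k+1) = braidGen n k * bklWord n i k :=
    bklWord_succ n i k (by omega)
  have c1 : Commute (braidGen n k) (bklWord n (k+1) j) := by
    apply commute_word
    intro t ht htj
    exact comm_gen n k t hk1 (by omega) (by omega) (by omega) (by omega)
  have c2 : Commute (braidGen n (k+1)) (cj (bklWord n i k) (braidGen n i)) := by
    have cv : Commute (braidGen n (k+1)) (bklWord n i k) := by
      apply commute_word
      intro t ht htj
      exact comm_gen n (k+1) t (by omega) (by omega) (by omega) (by omega) (by omega)
    have cg : Commute (braidGen n (k+1)) (braidGen n i) :=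
      comm_gen n (k+1) i (by omega) hi (by omega) (by omega) (by omega)
    exact (cv.mul_right cg).mul_right cv.inv_right
  have hbr := braid_rel n k (by omega) (by omega)
  -- goal : Commute σ_k ρ_{i,j}
  have key : cj (braidGen n k) (bklGen n i j) = bklGen n i j := by
    rw [bklGen_eq_cj, cj_cj, hw, hw2, hw3]
    have e1 : braidGen n k * (bklWord n (k+1) j * (braidGen n (k+1) *
        (braidGen n k * bklWord n i k)))
        = bklWord n (k+1) j * (braidGen n (k+1) * braidGen n k) *
          (braidGen n (k+1) * bklWord n i k) := by
      have := c1.eq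
      calc braidGen n k * (bklWord n (k+1) j * (braidGen n (k+1) *
            (braidGen n k * bklWord n i k)))
          = (braidGen n k * bklWord n (k+1) j) * (braidGen n (k+1) * braidGen n k *
              bklWord n i k) := by group
        _ = (bklWord n (k+1) j * braidGen n k) * (braidGen n (k+1) * braidGen n k *
              bklWord n i k) := by rw [c1.eq]
        _ = bklWord n (k+1) j * (braidGen n k * braidGen n (k+1) * braidGen n k) *
              bklWord n i k := by group
        _ = bklWord n (k+1) j * (braidGen n (k+1) * braidGen n k * braidGen n (k+1)) *
              bklWord n i k := by rw [hbr]
        _ = bklWord n (k+1) j * (braidGen n (k+1) * braidGen n k) *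
              (braidGen n (k+1) * bklWord n i k) := by group
    rw [e1]
    calc cj (bklWord n (k+1) j * (braidGen n (k+1) * braidGen n k) *
            (braidGen n (k+1) * bklWord n i k)) (braidGen n i)
        = cj (bklWord n (k+1) j * (braidGen n (k+1) * braidGen n k))
            (cj (braidGen n (k+1)) (cj (bklWord n i k) (braidGen n i))) := by
          rw [cj_cj, cj_cj]; congr 1; group
      _ = cj (bklWord n (k+1) j * (braidGen n (k+1) * braidGen n k))
            (cj (bklWord n i k) (braidGen n i)) := by rw [cj_eq_of_commute c2]
      _ = cj (bklWord n (k+1) j * (braidGen n (k+1) * (braidGen n k * bklWord n i k)))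
            (braidGen n i) := by rw [cj_cj]; congr 1; group
  have : braidGen n k * bklGen n i j = bklGen n i j * braidGen n k := by
    have := key
    rw [cj] at this
    calc braidGen n k * bklGen n i j
        = braidGen n k * bklGen n i j * (braidGen n k)⁻¹ * braidGen n k := by group
      _ = bklGen n i j * braidGen n k := by rw [this]
  exact this

/-- Lemma D/C: conjugating `ρ_{a,j}` by `σ_a` raises the lower index. -/
lemma conj_bkl_low (n a j : ℕ) (ha : 1 ≤ a) (haj : a + 1 < j) (hjn : j ≤ n) :
    braidGen n a * bklGen n a j * (braidGen n a)⁻¹ = bklGen n (a+1) j := by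
  have hw : bklWord n a j = bklWord n (a+1) j * braidGen n (a+1) :=
    bklWord_succ_right n a j (by omega)
  have cW : Commute (braidGen n a) (bklWord n (a+1) j) := by
    apply commute_word
    intro t ht htj
    exact comm_gen n a t ha (by omega) (by omega) (by omega) (by omega)
  have hbr := braid_rel n a ha (by omega)
  show cj (braidGen n a) (bklGen n a j) = bklGen n (a+1) j
  rw [bklGen_eq_cj, cj_cj, hw]
  have e1 : braidGen n a * (bklWord n (a+1) j * braidGen n (a+1))
      = bklWord n (a+1) j * (braidGen n a * braidGen n (a+1)) := by
    calc braidGen n a * (bklWord n (a+1) j * braidGen n (a+1))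
        = (braidGen n a * bklWord n (a+1) j) * braidGen n (a+1) := by group
      _ = (bklWord n (a+1) j * braidGen n a) * braidGen n (a+1) := by rw [cW.eq]
      _ = bklWord n (a+1) j * (braidGen n a * braidGen n (a+1)) := by group
  rw [e1, ← cj_cj]
  have e2 : cj (braidGen n a * braidGen n (a+1)) (braidGen n a) = braidGen n (a+1) := by
    rw [cj]
    calc braidGen n a * braidGen n (a+1) * braidGen n a *
          (braidGen n a * braidGen n (a+1))⁻¹
        = braidGen n a * braidGen n (a+1) * braidGen n a *
          ((braidGen n (a+1))⁻¹ * (braidGen n a)⁻¹) := by group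
      _ = braidGen n (a+1) * braidGen n a * braidGen n (a+1) *
          ((braidGen n (a+1))⁻¹ * (braidGen n a)⁻¹) := by rw [hbr]
      _ = braidGen n (a+1) * (braidGen n a * (braidGen n a)⁻¹) := by group
      _ = braidGen n (a+1) := by group
  rw [e2, bklGen_eq_cj]

/-- Lemma E: conjugating `ρ_{i,j}` by `σ_j` raises the upper index. -/
lemma conj_bkl_high (n i j : ℕ) (hij : i + 1 ≤ j) :
    braidGen n j * bklGen n i j * (braidGen n j)⁻¹ = bklGen n i (j+1) := by
  show cj (braidGen n j) (bklGen n i j) = bklGen n i (j+1)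
  rw [bklGen_eq_cj, cj_cj, ← bklWord_succ n i j hij, bklGen_eq_cj]

lemma conj_self_of_commute {n : ℕ} {g x : BraidGroup n} (h : Commute g x) :
    g * x * g⁻¹ = x := by rw [h.eq, mul_inv_cancel_right]

section Transport

variable {G : Type*} [Group G] {n : ℕ} (f : BraidGroup n →* G)

lemma trans_fwd (g : BraidGroup n) {A B A' B' : BraidGroup n}
    (hA : g * A * g⁻¹ = A') (hB : g * B * g⁻¹ = B') (h : f A = f B) : f A' = f B' := by
  rw [← hA, ← hB]
  simp [map_mul, h]

lemma trans_bwd (g : BraidGroup n) {A B A' B' : BraidGroup n}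
    (hA : g * A' * g⁻¹ = A) (hB : g * B' * g⁻¹ = B) (h : f A = f B) : f A' = f B' := by
  rw [← hA, ← hB] at h
  simp only [map_mul, map_inv] at h
  exact mul_left_cancel (mul_right_cancel h)

lemma eq_of_braid_comm {x y : G} (hb : x * y * x = y * x * y) (hc : Commute x y) :
    x = y := by
  have h1 : y * (x * x) = y * (x * y) := by
    calc y * (x * x) = (y * x) * x := by group
      _ = (x * y) * x := by rw [hc.eq]
      _ = y * x * y := hb
      _ = y * (x * y) := by group
  exact mul_left_cancel (mul_left_cancel h1)

lemma commute_conj {w h x : G} (hc : Commute w (h * x * h⁻¹)) :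
    Commute (h⁻¹ * w * h) x := by
  have h2 : h⁻¹ * (w * (h * x * h⁻¹)) * h = h⁻¹ * ((h * x * h⁻¹) * w) * h := by
    rw [hc.eq]
  calc (h⁻¹ * w * h) * x = h⁻¹ * (w * (h * x * h⁻¹)) * h := by group
    _ = h⁻¹ * ((h * x * h⁻¹) * w) * h := h2
    _ = x * (h⁻¹ * w * h) := by group

lemma conj_of_commute_left {w y : G} (hc : Commute w y) : y⁻¹ * w * y = w := by
  rw [mul_assoc, hc.eq, inv_mul_cancel_left]

/-- S1: shared lowest point. -/
lemma S1 (a b c : ℕ) (ha : 1 ≤ a) (hab : a < b) (hbc : b < c) (hcn : c ≤ n)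
    (heq : f (bklGen n a b) = f (bklGen n a c)) :
    f (braidGen n a) = f (braidGen n (a+1)) := by
  have slideB : ∀ d b', b' = a + 1 + d → b' < c → f (bklGen n a b') = f (bklGen n a c) →
      f (bklGen n a (a+1)) = f (bklGen n a c) := by
    intro d
    induction d with
    | zero => intro b' hb' _ h; rw [hb'] at h; exact h
    | succ d ih =>
      intro b' hb' hbc' h
      set k := a + 1 + d with hk
      have e : b' = k + 1 := by omega
      rw [e] at h
      have hA := conj_bkl_high n a k (by omega)
      have hB := conj_self_of_commute
        (commute_bkl_inside n k a c (by omega) (by omega) (by omega) (by omega))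
      exact ih k rfl (by omega) (trans_bwd f _ hA hB h)
  have h1 : f (bklGen n a (a+1)) = f (bklGen n a c) :=
    slideB (b - (a+1)) b (by omega) hbc heq
  have slideC : ∀ d c', c' = a + 2 + d → c' ≤ n → f (bklGen n a (a+1)) = f (bklGen n a c') →
      f (bklGen n a (a+1)) = f (bklGen n a (a+2)) := by
    intro d
    induction d with
    | zero => intro c' hc' _ h; rw [hc'] at h; exact h
    | succ d ih =>
      intro c' hc' hcn' h
      set k := a + 2 + d with hk
      have e : c' = k + 1 := by omega
      rw [e] at h
      have hA := conj_self_of_commute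
        (commute_bkl_far n k a (a+1) (by omega) (by omega) (by omega) (by omega)
          (by omega) (by omega))
      have hB := conj_bkl_high n a k (by omega)
      exact ih k rfl (by omega) (trans_bwd f _ hA hB h)
  have h2 : f (bklGen n a (a+1)) = f (bklGen n a (a+2)) :=
    slideC (c - (a+2)) c (by omega) hcn h1
  have hA : braidGen n a * bklGen n a (a+1) * (braidGen n a)⁻¹ = bklGen n a (a+1) := by
    rw [bklGen_base]; group
  have hB := conj_bkl_low n a (a+2) ha (by omega) (by omega)
  have h3 : f (bklGen n a (a+1)) = f (bklGen n (a+1) (a+2)) := trans_fwd f _ hA hB h2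
  rw [bklGen_base, bklGen_base] at h3
  exact h3


lemma braid_f (m : ℕ) (h1 : 1 ≤ m) (h2 : m + 2 ≤ n) :
    f (braidGen n m) * f (braidGen n (m+1)) * f (braidGen n m)
      = f (braidGen n (m+1)) * f (braidGen n m) * f (braidGen n (m+1)) := by
  have := congrArg f (braid_rel n m h1 h2)
  simpa [map_mul] using this

lemma comm_f (i j : ℕ) (h1 : 1 ≤ i) (h2 : i + 2 ≤ j) (h3 : j ≤ n - 1) :
    Commute (f (braidGen n i)) (f (braidGen n j)) :=
  (comm_rel n i j h1 h2 h3).map f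

/-- S2: shared middle point. -/
lemma S2 (a b c : ℕ) (ha : 1 ≤ a) (hab : a < b) (hbc : b < c) (hcn : c ≤ n)
    (heq : f (bklGen n a b) = f (bklGen n b c)) :
    f (braidGen n a) = f (braidGen n (a+1)) := by
  have slideB : ∀ d b', b' = a + 1 + d → b' < c → f (bklGen n a b') = f (bklGen n b' c) →
      f (bklGen n a (a+1)) = f (bklGen n (a+1) c) := by
    intro d
    induction d with
    | zero => intro b' hb' _ h; rw [hb'] at h; exact h
    | succ d ih =>
      intro b' hb' hbc' h
      set k := a + 1 + d with hk
      have e : b' = k + 1 := by omega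
      rw [e] at h
      have hA := conj_bkl_high n a k (by omega)
      have hB := conj_bkl_low n k c (by omega) (by omega) (by omega)
      exact ih k rfl (by omega) (trans_bwd f _ hA hB h)
  have h1 := slideB (b - (a+1)) b (by omega) hbc heq
  have slideC : ∀ d c', c' = a + 2 + d → c' ≤ n →
      f (bklGen n a (a+1)) = f (bklGen n (a+1) c') →
      f (bklGen n a (a+1)) = f (bklGen n (a+1) (a+2)) := by
    intro d
    induction d with
    | zero => intro c' hc' _ h; rw [hc'] at h; exact h
    | succ d ih =>
      intro c' hc' hcn' h
      set k := a + 2 + d with hk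
      have e : c' = k + 1 := by omega
      rw [e] at h
      have hA := conj_self_of_commute
        (commute_bkl_far n k a (a+1) (by omega) (by omega) (by omega) (by omega)
          (by omega) (by omega))
      have hB := conj_bkl_high n (a+1) k (by omega)
      exact ih k rfl (by omega) (trans_bwd f _ hA hB h)
  have h2 := slideC (c - (a+2)) c (by omega) hcn h1
  rw [bklGen_base, bklGen_base] at h2
  exact h2

/-- S3: shared highest point. -/
lemma S3 (a b c : ℕ) (ha : 1 ≤ a) (hab : a < b) (hbc : b < c) (hcn : c ≤ n)
    (heq : f (bklGen n a c) = f (bklGen n b c)) :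
    f (braidGen n a) = f (braidGen n (a+1)) := by
  have slideB : ∀ d b', b' = a + 1 + d → b' < c → f (bklGen n a c) = f (bklGen n b' c) →
      f (bklGen n a c) = f (bklGen n (a+1) c) := by
    intro d
    induction d with
    | zero => intro b' hb' _ h; rw [hb'] at h; exact h
    | succ d ih =>
      intro b' hb' hbc' h
      set k := a + 1 + d with hk
      have e : b' = k + 1 := by omega
      rw [e] at h
      have hA := conj_self_of_commute
        (commute_bkl_inside n k a c (by omega) (by omega) (by omega) (by omega))
      have hB := conj_bkl_low n k c (by omega) (by omega) (by omega)
      exact ih k rfl (by omega) (trans_bwd f _ hA hB h)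
  have h1 := slideB (b - (a+1)) b (by omega) hbc heq
  have slideC : ∀ d c', c' = a + 2 + d → c' ≤ n →
      f (bklGen n a c') = f (bklGen n (a+1) c') →
      f (bklGen n a (a+2)) = f (bklGen n (a+1) (a+2)) := by
    intro d
    induction d with
    | zero => intro c' hc' _ h; rw [hc'] at h; exact h
    | succ d ih =>
      intro c' hc' hcn' h
      set k := a + 2 + d with hk
      have e : c' = k + 1 := by omega
      rw [e] at h
      have hA := conj_bkl_high n a k (by omega)
      have hB := conj_bkl_high n (a+1) k (by omega)
      exact ih k rfl (by omega) (trans_bwd f _ hA hB h)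
  have h2 := slideC (c - (a+2)) c (by omega) hcn h1
  have hA := conj_bkl_high n a (a+1) (by omega)
  have hB : braidGen n (a+1) * bklGen n (a+1) (a+2) * (braidGen n (a+1))⁻¹
      = bklGen n (a+1) (a+2) := by rw [bklGen_base]; group
  have h3 := trans_bwd f _ hA hB h2
  rw [bklGen_base, bklGen_base] at h3
  exact h3

/-- S4: disjoint, non-interleaved pairs. -/
lemma S4 (hn : 5 ≤ n) (a b c d : ℕ) (ha : 1 ≤ a) (hab : a < b) (hbc : b < c) (hcd : c < d) (hdn : d ≤ n)
    (heq : f (bklGen n a b) = f (bklGen n c d)) :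
    ∃ m, 1 ≤ m ∧ m + 2 ≤ n ∧ f (braidGen n m) = f (braidGen n (m+1)) := by
  have slideB : ∀ e b', b' = a + 1 + e → b' < c → f (bklGen n a b') = f (bklGen n c d) →
      f (bklGen n a (a+1)) = f (bklGen n c d) := by
    intro e
    induction e with
    | zero => intro b' hb' _ h; rw [hb'] at h; exact h
    | succ e ih =>
      intro b' hb' hbc' h
      set k := a + 1 + e with hk
      have e2 : b' = k + 1 := by omega
      rw [e2] at h
      have hA := conj_bkl_high n a k (by omega)
      have hB := conj_self_of_commute
        (commute_bkl_far n k c d (by omega) (by omega) (by omega) (by omega)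
          (by omega) (by omega))
      exact ih k rfl (by omega) (trans_bwd f _ hA hB h)
  have h1 := slideB (b - (a+1)) b (by omega) hbc heq
  have slideC : ∀ e c', c' = a + 2 + e → c' < d →
      f (bklGen n a (a+1)) = f (bklGen n c' d) →
      f (bklGen n a (a+1)) = f (bklGen n (a+2) d) := by
    intro e
    induction e with
    | zero => intro c' hc' _ h; rw [hc'] at h; exact h
    | succ e ih =>
      intro c' hc' hcd' h
      set k := a + 2 + e with hk
      have e2 : c' = k + 1 := by omega
      rw [e2] at h
      have hA := conj_self_of_commute
        (commute_bkl_far n k a (a+1) (by omega) (by omega) (by omega) (by omega)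
          (by omega) (by omega))
      have hB := conj_bkl_low n k d (by omega) (by omega) (by omega)
      exact ih k rfl (by omega) (trans_bwd f _ hA hB h)
  have h2 := slideC (c - (a+2)) c (by omega) hcd h1
  have slideD : ∀ e d', d' = a + 3 + e → d' ≤ n →
      f (bklGen n a (a+1)) = f (bklGen n (a+2) d') →
      f (bklGen n a (a+1)) = f (bklGen n (a+2) (a+3)) := by
    intro e
    induction e with
    | zero => intro d' hd' _ h; rw [hd'] at h; exact h
    | succ e ih =>
      intro d' hd' hdn' h
      set k := a + 3 + e with hk
      have e2 : d' = k + 1 := by omega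
      rw [e2] at h
      have hA := conj_self_of_commute
        (commute_bkl_far n k a (a+1) (by omega) (by omega) (by omega) (by omega)
          (by omega) (by omega))
      have hB := conj_bkl_high n (a+2) k (by omega)
      exact ih k rfl (by omega) (trans_bwd f _ hA hB h)
  have h3 := slideD (d - (a+3)) d (by omega) hdn h2
  rw [bklGen_base, bklGen_base] at h3
  -- h3 : f σ_a = f σ_{a+2}
  by_cases hcase : a + 4 ≤ n
  · have hcomm : Commute (f (braidGen n a)) (f (braidGen n (a+3))) :=
      comm_f f a (a+3) (by omega) (by omega) (by omega)
    rw [h3] at hcomm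
    have hbr := braid_f f (a+2) (by omega) (by omega)
    exact ⟨a+2, by omega, by omega, eq_of_braid_comm hbr hcomm⟩
  · have ha2 : 2 ≤ a := by omega
    have hcomm : Commute (f (braidGen n (a-1))) (f (braidGen n (a+2))) :=
      comm_f f (a-1) (a+2) (by omega) (by omega) (by omega)
    rw [← h3] at hcomm
    have hbr := braid_f f (a-1) (by omega) (by omega)
    have e : a - 1 + 1 = a := by omega
    rw [e] at hbr
    exact ⟨a - 1, by omega, by omega, by rw [e]; exact eq_of_braid_comm hbr hcomm⟩

/-- S5: disjoint, fully interleaved pairs. -/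
lemma S5 (hn : 5 ≤ n) (a b c d : ℕ) (ha : 1 ≤ a) (hab : a < b) (hbc : b < c) (hcd : c < d)
    (hdn : d ≤ n) (heq : f (bklGen n a c) = f (bklGen n b d)) :
    ∃ m, 1 ≤ m ∧ m + 2 ≤ n ∧ f (braidGen n m) = f (braidGen n (m+1)) := by
  have slideB : ∀ e b', b' = a + 1 + e → b' < c → f (bklGen n a c) = f (bklGen n b' d) →
      f (bklGen n a c) = f (bklGen n (a+1) d) := by
    intro e
    induction e with
    | zero => intro b' hb' _ h; rw [hb'] at h; exact h
    | succ e ih =>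
      intro b' hb' hbc' h
      set k := a + 1 + e with hk
      have e2 : b' = k + 1 := by omega
      rw [e2] at h
      have hA := conj_self_of_commute
        (commute_bkl_inside n k a c (by omega) (by omega) (by omega) (by omega))
      have hB := conj_bkl_low n k d (by omega) (by omega) (by omega)
      exact ih k rfl (by omega) (trans_bwd f _ hA hB h)
  have h1 := slideB (b - (a+1)) b (by omega) hbc heq
  have slideC : ∀ e c', c' = a + 2 + e → c' < d →
      f (bklGen n a c') = f (bklGen n (a+1) d) →
      f (bklGen n a (a+2)) = f (bklGen n (a+1) d) := by
    intro e
    induction e with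
    | zero => intro c' hc' _ h; rw [hc'] at h; exact h
    | succ e ih =>
      intro c' hc' hcd' h
      set k := a + 2 + e with hk
      have e2 : c' = k + 1 := by omega
      rw [e2] at h
      have hA := conj_bkl_high n a k (by omega)
      have hB := conj_self_of_commute
        (commute_bkl_inside n k (a+1) d (by omega) (by omega) (by omega) (by omega))
      exact ih k rfl (by omega) (trans_bwd f _ hA hB h)
  have h2 := slideC (c - (a+2)) c (by omega) hcd h1
  have slideD : ∀ e d', d' = a + 3 + e → d' ≤ n →
      f (bklGen n a (a+2)) = f (bklGen n (a+1) d') →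
      f (bklGen n a (a+2)) = f (bklGen n (a+1) (a+3)) := by
    intro e
    induction e with
    | zero => intro d' hd' _ h; rw [hd'] at h; exact h
    | succ e ih =>
      intro d' hd' hdn' h
      set k := a + 3 + e with hk
      have e2 : d' = k + 1 := by omega
      rw [e2] at h
      have hA := conj_self_of_commute
        (commute_bkl_far n k a (a+2) (by omega) (by omega) (by omega) (by omega)
          (by omega) (by omega))
      have hB := conj_bkl_high n (a+1) k (by omega)
      exact ih k rfl (by omega) (trans_bwd f _ hA hB h)
  have h3 := slideD (d - (a+3)) d (by omega) hdn h2
  rw [bklGen_two, bklGen_two] at h3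
  simp only [map_mul, map_inv] at h3
  -- h3 : y x y⁻¹ = z y z⁻¹ with x = fσ_a, y = fσ_{a+1}, z = fσ_{a+2}
  set x := f (braidGen n a) with hxd
  set y := f (braidGen n (a+1)) with hyd
  set z := f (braidGen n (a+2)) with hzd
  by_cases hcase : 2 ≤ a
  · set w := f (braidGen n (a-1)) with hwd
    have cwz : Commute w z := comm_f f (a-1) (a+2) (by omega) (by omega) (by omega)
    have cwy : Commute w y := comm_f f (a-1) (a+1) (by omega) (by omega) (by omega)
    have K : Commute w (z * y * z⁻¹) := (cwz.mul_right cwy).mul_right cwz.inv_right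
    rw [← h3] at K
    have K3 : Commute (y⁻¹ * w * y) x := commute_conj K
    rw [conj_of_commute_left cwy] at K3
    have hbr := braid_f f (a-1) (by omega) (by omega)
    have e : a - 1 + 1 = a := by omega
    rw [e] at hbr
    exact ⟨a - 1, by omega, by omega, by rw [e]; exact eq_of_braid_comm hbr K3⟩
  · have ha1 : a = 1 := by omega
    set w := f (braidGen n (a+3)) with hwd
    have cwx : Commute w x := (comm_f f a (a+3) (by omega) (by omega) (by omega)).symm
    have cwy : Commute w y := (comm_f f (a+1) (a+3) (by omega) (by omega) (by omega)).symm
    have K : Commute w (y * x * y⁻¹) := (cwy.mul_right cwx).mul_right cwy.inv_right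
    rw [h3] at K
    have K3 : Commute (z⁻¹ * w * z) y := commute_conj K
    have hbrzw := braid_f f (a+2) (by omega) (by omega)
    -- z * w * z = w * z * w  hence  z⁻¹ * w * z = w * z * w⁻¹
    have e4 : z⁻¹ * w * z = w * z * w⁻¹ := by
      have h5 : z * (w * z * w⁻¹) = w * z := by
        calc z * (w * z * w⁻¹) = (z * w * z) * w⁻¹ := by group
          _ = (w * z * w) * w⁻¹ := by rw [hbrzw]
          _ = w * z := by group
      calc z⁻¹ * w * z = z⁻¹ * (w * z) := by group
        _ = z⁻¹ * (z * (w * z * w⁻¹)) := by rw [h5]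
        _ = w * z * w⁻¹ := by group
    rw [e4] at K3
    have K4 : Commute (w⁻¹ * y * w) z := commute_conj K3.symm
    rw [conj_of_commute_left cwy.symm] at K4
    have hbr := braid_f f (a+1) (by omega) (by omega)
    exact ⟨a + 1, by omega, by omega, eq_of_braid_comm hbr K4⟩


/-- S6: disjoint, nested pairs. -/
lemma S6 (hn : 5 ≤ n) (a b c d : ℕ) (ha : 1 ≤ a) (hab : a < b) (hbc : b < c) (hcd : c < d)
    (hdn : d ≤ n) (heq : f (bklGen n a d) = f (bklGen n b c)) :
    ∃ m, 1 ≤ m ∧ m + 2 ≤ n ∧ f (braidGen n m) = f (braidGen n (m+1)) := by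
  have slideB : ∀ e b', b' = a + 1 + e → b' < c → f (bklGen n a d) = f (bklGen n b' c) →
      f (bklGen n a d) = f (bklGen n (a+1) c) := by
    intro e
    induction e with
    | zero => intro b' hb' _ h; rw [hb'] at h; exact h
    | succ e ih =>
      intro b' hb' hbc' h
      set k := a + 1 + e with hk
      have e2 : b' = k + 1 := by omega
      rw [e2] at h
      have hA := conj_self_of_commute
        (commute_bkl_inside n k a d (by omega) (by omega) (by omega) (by omega))
      have hB := conj_bkl_low n k c (by omega) (by omega) (by omega)
      exact ih k rfl (by omega) (trans_bwd f _ hA hB h)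
  have h1 := slideB (b - (a+1)) b (by omega) hbc heq
  have slideC : ∀ e c', c' = a + 2 + e → c' < d →
      f (bklGen n a d) = f (bklGen n (a+1) c') →
      f (bklGen n a d) = f (bklGen n (a+1) (a+2)) := by
    intro e
    induction e with
    | zero => intro c' hc' _ h; rw [hc'] at h; exact h
    | succ e ih =>
      intro c' hc' hcd' h
      set k := a + 2 + e with hk
      have e2 : c' = k + 1 := by omega
      rw [e2] at h
      have hA := conj_self_of_commute
        (commute_bkl_inside n k a d (by omega) (by omega) (by omega) (by omega))
      have hB := conj_bkl_high n (a+1) k (by omega)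
      exact ih k rfl (by omega) (trans_bwd f _ hA hB h)
  have h2 := slideC (c - (a+2)) c (by omega) hcd h1
  have slideD : ∀ e d', d' = a + 3 + e → d' ≤ n →
      f (bklGen n a d') = f (bklGen n (a+1) (a+2)) →
      f (bklGen n a (a+3)) = f (bklGen n (a+1) (a+2)) := by
    intro e
    induction e with
    | zero => intro d' hd' _ h; rw [hd'] at h; exact h
    | succ e ih =>
      intro d' hd' hdn' h
      set k := a + 3 + e with hk
      have e2 : d' = k + 1 := by omega
      rw [e2] at h
      have hA := conj_bkl_high n a k (by omega)
      have hB := conj_self_of_commute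
        (commute_bkl_far n k (a+1) (a+2) (by omega) (by omega) (by omega) (by omega)
          (by omega) (by omega))
      exact ih k rfl (by omega) (trans_bwd f _ hA hB h)
  have h3 := slideD (d - (a+3)) d (by omega) hdn h2
  rw [bklGen_base] at h3
  -- h3 : f ρ_{a,a+3} = f σ_{a+1}
  set x := f (braidGen n a) with hxd
  set y := f (braidGen n (a+1)) with hyd
  by_cases hcase : a + 4 ≤ n
  · -- conjugate by σ_{a+3} then σ_{a+2}
    have hA2 := conj_bkl_high n a (a+3) (by omega)
    have hB2 := conj_self_of_commute
      (commute_bkl_far n (a+3) (a+1) (a+2) (by omega) (by omega) (by omega) (by omega)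
        (by omega) (by omega))
    have h4 : f (bklGen n a (a+3+1)) = f (bklGen n (a+1) (a+2)) := by
      have h3' : f (bklGen n a (a+3)) = f (bklGen n (a+1) (a+2)) := by
        rw [bklGen_base]; exact h3
      exact trans_fwd f _ hA2 hB2 h3'
    have hA3 := conj_self_of_commute
      (commute_bkl_inside n (a+2) a (a+3+1) (by omega) (by omega) (by omega) (by omega))
    have hB3 := conj_bkl_high n (a+1) (a+2) (by omega)
    have h5 : f (bklGen n a (a+3+1)) = f (bklGen n (a+1) (a+2+1)) :=
      trans_fwd f _ hA3 hB3 h4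
    -- also conjugate the original by σ_a
    have hA4 := conj_bkl_low n a (a+3) (by omega) (by omega) (by omega)
    have key1 : f (bklGen n (a+1) (a+3)) = x * y * x⁻¹ := by
      rw [← hA4]
      simp only [map_mul, map_inv, h3]
      rfl
    have key2 : f (bklGen n (a+1) (a+3)) = y := by
      have e5 : (a+2+1) = a + 3 := by omega
      rw [e5] at h5
      rw [← h5, h4, bklGen_base]
    have hxyx : x * y * x⁻¹ = y := by rw [← key1, key2]
    have hc : Commute x y := by
      have : x * y = y * x := by
        calc x * y = (x * y * x⁻¹) * x := by group
          _ = y * x := by rw [hxyx]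
      exact this
    have hbr := braid_f f a (by omega) (by omega)
    exact ⟨a, by omega, by omega, eq_of_braid_comm hbr hc⟩
  · -- n = a+3 ;  a ≥ 2
    have ha2 : 2 ≤ a := by omega
    set z := f (braidGen n (a+2)) with hzd
    -- Q1 : z * f ρ_{a,a+2} * z⁻¹ = y
    have hQ1 : z * f (bklGen n a (a+2)) * z⁻¹ = y := by
      have := conj_bkl_high n a (a+2) (by omega)
      have h6 : f (braidGen n (a+2) * bklGen n a (a+2) * (braidGen n (a+2))⁻¹)
          = f (bklGen n a (a+2+1)) := by rw [this]
      simp only [map_mul, map_inv] at h6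
      have e5 : a + 2 + 1 = a + 3 := by omega
      rw [e5] at h6
      rw [h6, h3]
    -- Q2 : transport by σ_{a-1}
    have e6 : a - 1 + 1 = a := by omega
    have hA5 := conj_bkl_low n (a-1) (a+3) (by omega) (by omega) (by omega)
    rw [e6] at hA5
    have hB5 := conj_self_of_commute
      (commute_bkl_far n (a-1) (a+1) (a+2) (by omega) (by omega) (by omega) (by omega)
        (by omega) (by omega))
    have h3'' : f (bklGen n a (a+3)) = f (bklGen n (a+1) (a+2)) := by
      rw [bklGen_base]; exact h3
    have h7 : f (bklGen n (a-1) (a+3)) = f (bklGen n (a+1) (a+2)) :=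
      trans_bwd f _ hA5 hB5 h3''
    -- Q3 : transport by σ_a
    have hA6 := conj_self_of_commute
      (commute_bkl_inside n a (a-1) (a+3) (by omega) (by omega) (by omega) (by omega))
    have hB6 := conj_bkl_low n a (a+2) (by omega) (by omega) (by omega)
    have h8 : f (bklGen n (a-1) (a+3)) = f (bklGen n a (a+2)) :=
      trans_bwd f _ hA6 hB6 h7
    have h9 : f (bklGen n a (a+2)) = y := by
      rw [← h8, h7, bklGen_base]
    rw [h9] at hQ1
    have hc : Commute z y := by
      have : z * y = y * z := by
        calc z * y = (z * y * z⁻¹) * z := by group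
          _ = y * z := by rw [hQ1]
      exact this
    have hbr := braid_f f (a+1) (by omega) (by omega)
    exact ⟨a + 1, by omega, by omega, eq_of_braid_comm hbr hc.symm⟩


lemma adj_all (hm : ∃ m, 1 ≤ m ∧ m + 2 ≤ n ∧ f (braidGen n m) = f (braidGen n (m+1))) :
    ∀ t, 1 ≤ t → t + 2 ≤ n → f (braidGen n t) = f (braidGen n (t+1)) := by
  obtain ⟨m, hm1, hm2, hme⟩ := hm
  have up : ∀ e, m + e + 2 ≤ n → f (braidGen n (m+e)) = f (braidGen n (m+e+1)) := by
    intro e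
    induction e with
    | zero => intro _; exact hme
    | succ e ih =>
      intro hb
      have ihe := ih (by omega)
      have hcomm : Commute (f (braidGen n (m+e))) (f (braidGen n (m+e+2))) :=
        comm_f f (m+e) (m+e+2) (by omega) (by omega) (by omega)
      rw [ihe] at hcomm
      have hbr := braid_f f (m+e+1) (by omega) (by omega)
      have : f (braidGen n (m+e+1)) = f (braidGen n (m+e+2)) :=
        eq_of_braid_comm hbr hcomm
      exact this
  have down : ∀ e t, t + e = m → 1 ≤ t → f (braidGen n t) = f (braidGen n (t+1)) := by
    intro e
    induction e with
    | zero =>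
      intro t ht _
      have : t = m := by omega
      rw [this]; exact hme
    | succ e ih =>
      intro t ht h1t
      have ihe := ih (t+1) (by omega) (by omega)
      have hcomm : Commute (f (braidGen n t)) (f (braidGen n (t+2))) :=
        comm_f f t (t+2) (by omega) (by omega) (by omega)
      rw [← ihe] at hcomm
      have hbr := braid_f f t (by omega) (by omega)
      exact eq_of_braid_comm hbr hcomm
  intro t h1 h2
  rcases le_or_gt m t with hmt | hmt
  · have := up (t - m) (by omega)
    have e : m + (t - m) = t := by omega
    rw [e] at this
    exact this
  · exact down (m - t) t (by omega) h1

lemma braidGen_of {n : ℕ} (y : Fin (n-1)) : braidGen n ((y : ℕ) + 1) = PresentedGroup.of y := by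
  have h : (y : ℕ) + 1 - 1 < n - 1 := by simp [y.isLt]
  rw [braidGen_eq n _ h]
  congr 1

lemma range_cyclic (hn : 5 ≤ n)
    (hadj : ∀ t, 1 ≤ t → t + 2 ≤ n → f (braidGen n t) = f (braidGen n (t+1))) :
    IsCyclic f.range := by
  have hall : ∀ t, 1 ≤ t → t ≤ n - 1 → f (braidGen n t) = f (braidGen n 1) := by
    intro t
    induction t with
    | zero => intro h; omega
    | succ t ih =>
      intro _ h2
      rcases Nat.eq_zero_or_pos t with rfl | ht
      · rfl
      · rw [← hadj t ht (by omega)]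
        exact ih ht (by omega)
  set c := f (braidGen n 1) with hc
  have hgen : ∀ x : BraidGroup n, f x ∈ Subgroup.zpowers c := by
    intro x
    have hx : x ∈ Subgroup.closure (Set.range (PresentedGroup.of : Fin (n-1) → BraidGroup n)) := by
      rw [PresentedGroup.closure_range_of]; trivial
    refine Subgroup.closure_induction ?_ ?_ ?_ ?_ hx
    · rintro _ ⟨y, rfl⟩
      have h1 : f (PresentedGroup.of y : BraidGroup n) = c := by
        rw [← braidGen_of y]
        exact hall ((y : ℕ) + 1) (by omega) (by have := y.isLt; omega)
      rw [h1]
      exact Subgroup.mem_zpowers c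
    · rw [map_one]; exact one_mem _
    · intro a b _ _ ha hb
      rw [map_mul]; exact mul_mem ha hb
    · intro a _ ha
      have := inv_mem ha; rw [← map_inv] at this; exact this
  have hcmem : c ∈ f.range := ⟨braidGen n 1, rfl⟩
  refine ⟨⟨⟨c, hcmem⟩, ?_⟩⟩
  rintro ⟨g, hg⟩
  obtain ⟨β, hβ⟩ := hg
  have : g ∈ Subgroup.zpowers c := hβ ▸ hgen β
  obtain ⟨k, hk⟩ := Subgroup.mem_zpowers_iff.mp this
  refine Subgroup.mem_zpowers_iff.mpr ⟨k, ?_⟩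
  ext
  rw [SubgroupClass.coe_zpow]
  exact hk

/-- Main reduction: equal images of distinct BKL generators force two adjacent
Artin generators to have equal images. -/
lemma main_reduction (hn : 5 ≤ n) (i j k l : ℕ) (hi : 1 ≤ i) (hij : i < j) (hj : j ≤ n)
    (hk : 1 ≤ k) (hkl : k < l) (hl : l ≤ n) (hne : (i, j) ≠ (k, l))
    (heq : f (bklGen n i j) = f (bklGen n k l)) :
    ∃ m, 1 ≤ m ∧ m + 2 ≤ n ∧ f (braidGen n m) = f (braidGen n (m+1)) := by
  by_cases hik : i = k
  · subst hik
    have hjl : j ≠ l := fun h => hne (by rw [h])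
    rcases Nat.lt_or_ge j l with h | h
    · exact ⟨i, hi, by omega, S1 f i j l hi hij h hl heq⟩
    · exact ⟨i, hi, by omega, S1 f i l j hi hkl (by omega) hj heq.symm⟩
  · by_cases hjl : j = l
    · subst hjl
      rcases Nat.lt_or_ge i k with h | h
      · exact ⟨i, hi, by omega, S3 f i k j hi h hkl hj heq⟩
      · exact ⟨k, hk, by omega, S3 f k i j hk (by omega) hij hj heq.symm⟩
    · by_cases hjk : j = k
      · subst hjk
        exact ⟨i, hi, by omega, S2 f i j l hi hij hkl hl heq⟩
      · by_cases hil : i = l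
        · subst hil
          exact ⟨k, hk, by omega, S2 f k i j hk hkl hij hj heq.symm⟩
        · -- all four distinct
          rcases Nat.lt_or_ge j k with h1 | h1
          · exact S4 f hn i j k l hi hij h1 hkl hl heq
          · rcases Nat.lt_or_ge l i with h2 | h2
            · exact S4 f hn k l i j hk hkl h2 hij hj heq.symm
            · rcases Nat.lt_or_ge i k with h3 | h3
              · -- i < k, k < j (since j ≠ k, j ≥ k from ¬(j<k)), compare j l
                rcases Nat.lt_or_ge j l with h4 | h4
                · exact S5 f hn i k j l hi h3 (by omega) h4 hl heq
                · exact S6 f hn i k l j hi h3 (by omega) (by omega) hj heq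
              · rcases Nat.lt_or_ge l j with h4 | h4
                · exact S5 f hn k i l j hk (by omega) (by omega) h4 hj heq.symm
                · exact S6 f hn k i j l hk (by omega) (by omega) (by omega) hl heq.symm

end Transport

/-- For `n ≥ 5` and a homomorphism from `B_n` with non-cyclic range, the images of
the Birman--Ko--Lee generators `ρ_{i,j}`, `1 ≤ i < j ≤ n`, are pairwise distinct. -/
theorem bkl_images_distinct_of_noncyclic
    (n : ℕ) (hn : 5 ≤ n) (G : Type) [Group G]
    (f : BraidGroup n →* G) (hf : ¬ IsCyclic f.range)
    (i j k l : ℕ) (hi : 1 ≤ i) (hij : i < j) (hj : j ≤ n)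
    (hk : 1 ≤ k) (hkl : k < l) (hl : l ≤ n) (hne : (i, j) ≠ (k, l)) :
    f (bklGen n i j) ≠ f (bklGen n k l) := by
  intro heq
  exact hf (range_cyclic f hn
    (adj_all f (main_reduction f hn i j k l hi hij hj hk hkl hl hne heq)))
end

section
/- Let n ≥ 3 and let B_n be the braid group on n strands with generators σ_1, …, σ_{n−1}. The normal closure of the single element σ_1 σ_2⁻¹ in B_n equals the commutator subgroup of B_n. -/
lemma braid_rel_s11 {n : ℕ} (i j : Fin (n - 1)) (h : (j : ℕ) = (i : ℕ) + 1) :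
    (PresentedGroup.of i : PresentedGroup (braidRels n)) * PresentedGroup.of j *
      PresentedGroup.of i =
    PresentedGroup.of j * PresentedGroup.of i * PresentedGroup.of j := by
  have h1 : PresentedGroup.mk (braidRels n)
      (FreeGroup.of i * FreeGroup.of j * FreeGroup.of i *
        (FreeGroup.of j * FreeGroup.of i * FreeGroup.of j)⁻¹) = 1 :=
    (QuotientGroup.eq_one_iff _).2 (Subgroup.subset_normalClosure (Or.inl ⟨i, j, h, rfl⟩))
  rw [map_mul, map_inv, mul_inv_eq_one] at h1
  simpa [map_mul, PresentedGroup.of] using h1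

lemma comm_rel_s11 {n : ℕ} (i j : Fin (n - 1)) (h : (i : ℕ) + 2 ≤ (j : ℕ)) :
    (PresentedGroup.of i : PresentedGroup (braidRels n)) * PresentedGroup.of j =
    PresentedGroup.of j * PresentedGroup.of i := by
  have h1 : PresentedGroup.mk (braidRels n)
      (FreeGroup.of i * FreeGroup.of j * (FreeGroup.of j * FreeGroup.of i)⁻¹) = 1 :=
    (QuotientGroup.eq_one_iff _).2 (Subgroup.subset_normalClosure (Or.inr ⟨i, j, h, rfl⟩))
  rw [map_mul, map_inv, mul_inv_eq_one] at h1
  simpa [map_mul, PresentedGroup.of] using h1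

open scoped commutatorElement

/-- For `n ≥ 3`, the normal closure of `σ_1 σ_2⁻¹` in `B_n` is the commutator
subgroup of `B_n`. -/
theorem normalClosure_sigma_one_mul_sigma_two_inv_eq_commutator
    (n : ℕ) (hn : 3 ≤ n) :
    Subgroup.normalClosure {braidGen n 1 * (braidGen n 2)⁻¹} =
      commutator (BraidGroup n) := by
  have h0 : (0 : ℕ) < n - 1 := by omega
  have h1 : (1 : ℕ) < n - 1 := by omega
  have e1 : braidGen n 1 =
      (PresentedGroup.of (⟨0, h0⟩ : Fin (n - 1)) : PresentedGroup (braidRels n)) := by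
    rw [braidGen]; exact dif_pos (show 1 - 1 < n - 1 from h0)
  have e2 : braidGen n 2 =
      (PresentedGroup.of (⟨1, h1⟩ : Fin (n - 1)) : PresentedGroup (braidRels n)) := by
    rw [braidGen]; exact dif_pos (show 2 - 1 < n - 1 from h1)
  rw [e1, e2]
  have hrel : (PresentedGroup.of ⟨0, h0⟩ : BraidGroup n) * PresentedGroup.of ⟨1, h1⟩ *
      PresentedGroup.of ⟨0, h0⟩ =
      PresentedGroup.of ⟨1, h1⟩ * PresentedGroup.of ⟨0, h0⟩ * PresentedGroup.of ⟨1, h1⟩ :=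
    braid_rel_s11 _ _ rfl
  apply le_antisymm
  · -- normal closure ≤ commutator
    apply Subgroup.normalClosure_le_normal
    rw [Set.singleton_subset_iff]
    set a : BraidGroup n := PresentedGroup.of ⟨0, h0⟩
    set b : BraidGroup n := PresentedGroup.of ⟨1, h1⟩
    have key : ⁅a, a * b⁆ = a * b⁻¹ := by
      have h2 : ⁅a, a * b⁆ * (a * b * a) = (a * b⁻¹) * (a * b * a) := by
        conv_rhs => rw [show a * b * a = b * a * b from hrel]
        rw [commutatorElement_def]
        group
      exact mul_right_cancel h2
    rw [← key]
    exact Subgroup.commutator_mem_commutator (Subgroup.mem_top _) (Subgroup.mem_top _)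
  · -- commutator ≤ normal closure
    set N := Subgroup.normalClosure
      {(PresentedGroup.of ⟨0, h0⟩ : BraidGroup n) * (PresentedGroup.of ⟨1, h1⟩)⁻¹} with hN
    let π : PresentedGroup (braidRels n) →* PresentedGroup (braidRels n) ⧸ N := QuotientGroup.mk' N
    have hgen : ∀ k, ∀ hk : k < n - 1,
        π (PresentedGroup.of (⟨k, hk⟩ : Fin (n - 1))) =
          π (PresentedGroup.of (⟨0, h0⟩ : Fin (n - 1))) := by
      intro k
      induction k using Nat.strong_induction_on with
      | _ k ih =>
        match k with
        | 0 => intro _; rfl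
        | 1 =>
          intro hk
          have hmem : (PresentedGroup.of ⟨0, h0⟩ : BraidGroup n) *
              (PresentedGroup.of ⟨1, h1⟩)⁻¹ ∈ N := Subgroup.subset_normalClosure rfl
          have h2 : π ((PresentedGroup.of ⟨0, h0⟩ : BraidGroup n) *
              (PresentedGroup.of ⟨1, h1⟩)⁻¹) = 1 := (QuotientGroup.eq_one_iff _).2 hmem
          rw [map_mul, map_inv, mul_inv_eq_one] at h2
          exact h2.symm
        | (k + 2) =>
          intro hk
          have hk1 : k + 1 < n - 1 := by omega
          have hk0 : k < n - 1 := by omega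
          have ih1 := ih (k + 1) (by omega) hk1
          have ih0 := ih k (by omega) hk0
          set x := π (PresentedGroup.of (⟨0, h0⟩ : Fin (n - 1)))
          set A := π (PresentedGroup.of (⟨k + 1, hk1⟩ : Fin (n - 1))) with hA
          set C := π (PresentedGroup.of (⟨k + 2, hk⟩ : Fin (n - 1))) with hC
          have hbr : A * C * A = C * A * C := by
            rw [hA, hC, ← map_mul, ← map_mul, ← map_mul, ← map_mul]
            exact congrArg π (braid_rel_s11 ⟨k + 1, hk1⟩ ⟨k + 2, hk⟩ rfl)
          have hAC : A * C = C * A := by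
            have hc : π (PresentedGroup.of (⟨k, hk0⟩ : Fin (n - 1))) * C =
                C * π (PresentedGroup.of (⟨k, hk0⟩ : Fin (n - 1))) := by
              rw [hC, ← map_mul, ← map_mul]
              exact congrArg π (comm_rel_s11 ⟨k, hk0⟩ ⟨k + 2, hk⟩ (by simp))
            rw [ih0, ← ih1] at hc
            exact hc
          have h3 : C * (A * A) = C * (A * C) := by
            calc C * (A * A) = A * C * A := by rw [hAC]; group
              _ = C * A * C := hbr
              _ = C * (A * C) := by group
          have h4 := mul_left_cancel (mul_left_cancel h3)
          rw [← h4]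
          exact ih1
    have hall : ∀ g : BraidGroup n,
        π g ∈ Subgroup.zpowers (π (PresentedGroup.of (⟨0, h0⟩ : Fin (n - 1)))) := by
      intro g
      refine PresentedGroup.generated_by (braidRels n)
        ((Subgroup.zpowers (π (PresentedGroup.of (⟨0, h0⟩ : Fin (n - 1))))).comap π) ?_ g
      intro j
      have hj := hgen j.1 j.2
      rw [Fin.eta] at hj
      refine Subgroup.mem_comap.2 (Subgroup.mem_zpowers_iff.2 ⟨1, ?_⟩)
      rw [zpow_one]
      exact hj.symm
    rw [commutator_def, Subgroup.commutator_le]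
    intro g _ h _
    refine (QuotientGroup.eq_one_iff _).1 ?_
    change PresentedGroup (braidRels n) at g h
    show π ⁅g, h⁆ = 1
    rw [map_commutatorElement, commutatorElement_eq_one_iff_mul_comm]
    obtain ⟨cg, hcg⟩ := Subgroup.mem_zpowers_iff.1 (hall g)
    obtain ⟨ch, hch⟩ := Subgroup.mem_zpowers_iff.1 (hall h)
    rw [← hcg, ← hch, zpow_mul_comm]
end

section
/- Let B_4 be the braid group on 4 strands with generators σ_1, σ_2, σ_3, and set α = σ_3 σ_2 σ_1. There exists a surjective group homomorphism f : B_4 → Equiv.Perm (Fin 4) such that f(σ_1) is the 4-cycle (1 2 3 4) and f(α) is the transposition (1 2). -/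
def myGen : Fin 3 → Equiv.Perm (Fin 4)
  | 0 => c[(0 : Fin 4), 1, 2, 3]
  | 1 => c[(0 : Fin 4), 2, 3, 1]
  | 2 => c[(0 : Fin 4), 1, 2, 3]

theorem myGen_rels : ∀ r ∈ braidRels 4, FreeGroup.lift myGen r = 1 := by
  rintro r (⟨i, j, hij, rfl⟩ | ⟨i, j, hij, rfl⟩) <;>
    simp only [map_mul, map_inv, FreeGroup.lift_apply_of, mul_inv_eq_one] <;>
    fin_cases i <;> fin_cases j <;> simp_all <;> decide

theorem myGen_hgen (x : Fin 3) :
    PresentedGroup.toGroup myGen_rels (PresentedGroup.of x) = myGen x :=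
  PresentedGroup.toGroup.of myGen_rels

theorem myGen_key1 :
    PresentedGroup.toGroup myGen_rels (PresentedGroup.of 0 : BraidGroup 4) =
      c[(0 : Fin 4), 1, 2, 3] := by
  rw [myGen_hgen]
  decide

theorem myGen_key2 :
    PresentedGroup.toGroup myGen_rels
      ((PresentedGroup.of 2 : BraidGroup 4) * PresentedGroup.of 1 * PresentedGroup.of 0) =
      Equiv.swap (0 : Fin 4) 1 := by
  rw [map_mul, map_mul, myGen_hgen, myGen_hgen, myGen_hgen]
  decide

/-- There is an epimorphism `f : B_4 → S_4` with `f(σ_1) = (1 2 3 4)` and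
`f(σ_3 σ_2 σ_1) = (1 2)`. -/
theorem exists_exceptional_epimorphism_braid_four_to_perm_four :
    ∃ f : BraidGroup 4 →* Equiv.Perm (Fin 4), Function.Surjective f ∧
      f (braidGen 4 1) = c[(0 : Fin 4), 1, 2, 3] ∧
      f (braidGen 4 3 * braidGen 4 2 * braidGen 4 1) = Equiv.swap (0 : Fin 4) 1 := by
  refine ⟨PresentedGroup.toGroup myGen_rels, ?_, ?_, ?_⟩
  · refine (MonoidHom.range_eq_top (f := (PresentedGroup.toGroup myGen_rels :
      PresentedGroup (braidRels 4) →* Equiv.Perm (Fin 4)))).mp ?_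
    rw [eq_top_iff]
    have hc : (c[(0 : Fin 4), 1, 2, 3]).IsCycle :=
      Cycle.isCycle_formPerm _ (by decide)
        ((Cycle.nontrivial_coe_nodup_iff (by decide)).mpr (by decide))
    have h2 : (c[(0 : Fin 4), 1, 2, 3]).support = Finset.univ := by decide
    have hcl := Equiv.Perm.closure_cycle_adjacent_swap hc h2 (0 : Fin 4)
    have happ : (c[(0 : Fin 4), 1, 2, 3]) 0 = 1 := by decide
    rw [happ] at hcl
    rw [← hcl, Subgroup.closure_le]
    rintro x (rfl | rfl)
    · exact ⟨_, myGen_key1⟩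
    · exact ⟨_, myGen_key2⟩
  · show PresentedGroup.toGroup myGen_rels (braidGen 4 1) = _
    rw [braidGen]
    norm_num
    decide
  · show PresentedGroup.toGroup myGen_rels (braidGen 4 3 * braidGen 4 2 * braidGen 4 1) = _
    rw [braidGen, braidGen, braidGen]
    norm_num
    decide
end

section
/- Let B_4 be the braid group on 4 strands with generators σ_1, σ_2, σ_3, and set α = σ_3 σ_2 σ_1. There exists a group homomorphism f : B_4 → Equiv.Perm (Fin 4) such that f(σ_1) is the 3-cycle (1 2 3), f(α) is the double transposition (1 2)(3 4), and the range of f equals the alternating group on Fin 4 (Mathlib's alternatingGroup (Fin 4)). -/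
open Equiv Equiv.Perm in
section
open Equiv Equiv.Perm

def G4 : Fin 3 → Equiv.Perm (Fin 4)
  | 0 => c[(0 : Fin 4), 1, 2]
  | 1 => c[(0 : Fin 4), 3, 1]
  | 2 => c[(0 : Fin 4), 1, 2]

lemma G4_rels : ∀ r ∈ braidRels 4, FreeGroup.lift G4 r = 1 := by
  rintro r (⟨i, j, hij, rfl⟩ | ⟨i, j, hij, rfl⟩) <;>
    simp only [map_mul, map_inv, FreeGroup.lift_apply_of, mul_inv_eq_one] <;>
    fin_cases i <;> fin_cases j <;> simp_all <;> decide

lemma G4_even : ∀ i : Fin 3, G4 i ∈ alternatingGroup (Fin 4) := by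
  intro i
  rw [Equiv.Perm.mem_alternatingGroup]
  fin_cases i <;> decide

lemma threeCycle_cases : ∀ σ : Equiv.Perm (Fin 4), σ * σ * σ = 1 → σ = 1 ∨
    σ = G4 0 ∨ σ = G4 0 * G4 0 ∨ σ = G4 1 ∨ σ = G4 1 * G4 1 ∨ σ = G4 1 * G4 0 ∨
    σ = G4 0 * G4 1 ∨ σ = G4 0 * G4 0 * G4 1 * G4 1 ∨ σ = G4 0 * G4 0 * G4 1 * G4 0 := by
  decide

def braidF : BraidGroup 4 →* Equiv.Perm (Fin 4) := PresentedGroup.toGroup G4_rels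

lemma braidF_gen (k : ℕ) (h : k - 1 < 4 - 1) :
    braidF (braidGen 4 k) = G4 ⟨k - 1, h⟩ := by
  unfold braidF braidGen
  erw [dif_pos h]
  exact PresentedGroup.toGroup.of G4_rels

/-- There is a homomorphism `f : B_4 → S_4` with `f(σ_1) = (1 2 3)`,
`f(σ_3 σ_2 σ_1) = (1 2)(3 4)` and range the alternating group `A_4`. -/
theorem exists_homomorphism_braid_four_onto_alternating_four :
    ∃ f : BraidGroup 4 →* Equiv.Perm (Fin 4),
      f (braidGen 4 1) = c[(0 : Fin 4), 1, 2] ∧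
      f (braidGen 4 3 * braidGen 4 2 * braidGen 4 1) =
        Equiv.swap (0 : Fin 4) 1 * Equiv.swap (2 : Fin 4) 3 ∧
      f.range = alternatingGroup (Fin 4) := by
  refine ⟨braidF, ?_, ?_, ?_⟩
  · rw [braidF_gen 1 (by norm_num)]
    decide
  · rw [map_mul, map_mul, braidF_gen 3 (by norm_num), braidF_gen 2 (by norm_num),
      braidF_gen 1 (by norm_num)]
    decide
  · have hrange : braidF.range =
        Subgroup.closure (Set.range G4) := by
      erw [MonoidHom.range_eq_map, ← PresentedGroup.closure_range_of (braidRels 4),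
        MonoidHom.map_closure]
      congr 1
      ext x
      simp only [Set.mem_image, Set.mem_range]
      constructor
      · rintro ⟨y, ⟨i, rfl⟩, rfl⟩
        exact ⟨i, ((PresentedGroup.toGroup.of G4_rels : braidF _ = _)).symm⟩
      · rintro ⟨i, rfl⟩
        exact ⟨PresentedGroup.of i, ⟨i, rfl⟩, (PresentedGroup.toGroup.of G4_rels : braidF _ = _)⟩
    rw [hrange]
    apply le_antisymm
    · rw [Subgroup.closure_le]
      rintro x ⟨i, rfl⟩
      exact G4_even i
    · rw [← Equiv.Perm.closure_three_cycles_eq_alternating, Subgroup.closure_le]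
      intro σ hσ
      have h3 : σ * σ * σ = 1 := by
        have := Equiv.Perm.IsThreeCycle.orderOf hσ
        have hpow : σ ^ 3 = 1 := by rw [← this]; exact pow_orderOf_eq_one σ
        rw [show σ * σ * σ = σ ^ 3 by rw [pow_succ, pow_succ, pow_one]]
        exact hpow
      have ha : G4 0 ∈ Subgroup.closure (Set.range G4) :=
        Subgroup.subset_closure ⟨0, rfl⟩
      have hb : G4 1 ∈ Subgroup.closure (Set.range G4) :=
        Subgroup.subset_closure ⟨1, rfl⟩
      rcases threeCycle_cases σ h3 with rfl | rfl | rfl | rfl | rfl | rfl | rfl | rfl | rfl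
      · simpa [Equiv.Perm.IsThreeCycle] using hσ
      · exact ha
      · exact mul_mem ha ha
      · exact hb
      · exact mul_mem hb hb
      · exact mul_mem hb ha
      · exact mul_mem ha hb
      · exact mul_mem (mul_mem (mul_mem ha ha) hb) hb
      · exact mul_mem (mul_mem (mul_mem ha ha) hb) ha

end
end
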